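/- arXiv:1507.07673 — 2 statements merged into one kernel-verified Lean document; each statement's English description precedes it below -/
import Mathlib

section
/- Let η_1, ..., η_n be n ≥ 2 i.i.d. real-valued random variables with common distribution V belonging to the class S(α) for some α ≥ 0. Then lim_{c→∞} lim_{x→∞} Pr(Σ_{i=1}^n η_i > x, η_1 > c, η_2 > c) / V̄(x) = 0. -/
set_option maxHeartbeats 1000000


open MeasureTheory ProbabilityTheory Filter Asymptotics

noncomputable section

/-- The tail function `Ū(x) = U((x,∞))` of a measure on `ℝ`. -/
def tailDist (μ : Measure ℝ) (x : ℝ) : ℝ := (μ (Set.Ioi x)).toReal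

/-- Convolution of two measures on `ℝ`. -/
def convDist (μ ν : Measure ℝ) : Measure ℝ := (μ.prod ν).map (fun p => p.1 + p.2)

/-- The distribution with CDF `V(x)𝟙_{x ≥ 0}`, i.e. the pushforward under `x ↦ max x 0`. -/
def posMod (μ : Measure ℝ) : Measure ℝ := μ.map (fun x => max x 0)

/-- `V̂(α) = ∫ e^{αx} V(dx)`. -/
def mgfVal (μ : Measure ℝ) (α : ℝ) : ℝ := ∫ x, Real.exp (α * x) ∂μ

/-- The convolution-equivalence class `S(α)`: a distribution `V` on `ℝ` is in `S(α)` if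
the distribution with CDF `V(x)𝟙_{x ≥ 0}` has everywhere positive tail,
`V̄(x-y)/V̄(x) → e^{αy}` for all `y`, `V̂(α) = ∫ e^{αx} V(dx) < ∞`, and
`\overline{V^{2*}}(x)/V̄(x) → 2V̂(α)`. -/
def MemCE (α : ℝ) (V : Measure ℝ) : Prop :=
  (∀ x : ℝ, 0 < tailDist (posMod V) x) ∧
  (∀ y : ℝ, Tendsto (fun x => tailDist (posMod V) (x - y) / tailDist (posMod V) x)
      atTop (nhds (Real.exp (α * y)))) ∧
  Integrable (fun x => Real.exp (α * x)) (posMod V) ∧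
  Tendsto (fun x => tailDist (convDist (posMod V) (posMod V)) x / tailDist (posMod V) x)
      atTop (nhds (2 * mgfVal (posMod V) α))

/-- Strongly regular variation `R*_{-α}`: the distribution `V` with tail
`V̄(x) = Ū(eˣ)/Ū(0)` (i.e. the conditional law of `ln ξ` given `ξ > 0`, where `ξ ∼ U`)
belongs to `S(α)`. -/
def MemSRV (α : ℝ) (U : Measure ℝ) : Prop :=
  U (Set.Ioi 0) ≠ 0 ∧
  MemCE α (((U (Set.Ioi 0))⁻¹ • U.restrict (Set.Ioi 0)).map Real.log)

/-- Regular variation `R_{-α}`: `Ū(x) > 0` for all `x` and `Ū(xy)/Ū(x) → y^{-α}` for `y > 0`. -/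
def MemRV (α : ℝ) (U : Measure ℝ) : Prop :=
  (∀ x : ℝ, 0 < tailDist U x) ∧
  ∀ y : ℝ, 0 < y →
    Tendsto (fun x => tailDist U (x * y) / tailDist U x) atTop (nhds (y ^ (-α)))

/-- Assumption A: every convex combination `pF + (1-p)G`, `0 < p < 1`,
is of strongly regular variation with index `-α`. -/
def AssumpA (α : ℝ) (F G : Measure ℝ) : Prop :=
  ∀ p : ℝ, 0 < p → p < 1 →
    MemSRV α (ENNReal.ofReal p • F + ENNReal.ofReal (1 - p) • G)

end

noncomputable section
open Set
namespace CEAux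

lemma convDist_eq_conv (μ ν : Measure ℝ) : convDist μ ν = μ.conv ν := rfl

instance instFinConv (μ ν : Measure ℝ) [IsFiniteMeasure μ] [IsFiniteMeasure ν] :
    IsFiniteMeasure (convDist μ ν) :=
  inferInstanceAs (IsFiniteMeasure (μ.conv ν))

lemma tailDist_nonneg (μ : Measure ℝ) (x : ℝ) : 0 ≤ tailDist μ x := ENNReal.toReal_nonneg

lemma tailDist_anti (μ : Measure ℝ) [IsFiniteMeasure μ] : Antitone (tailDist μ) := by
  intro a b hab
  exact ENNReal.toReal_mono (measure_ne_top _ _) (measure_mono (Ioi_subset_Ioi hab))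

lemma tailDist_meas (μ : Measure ℝ) [IsFiniteMeasure μ] : Measurable (tailDist μ) :=
  (tailDist_anti μ).measurable

lemma tailDist_le_mass (μ : Measure ℝ) [IsFiniteMeasure μ] (x : ℝ) :
    tailDist μ x ≤ (μ univ).toReal :=
  ENNReal.toReal_mono (measure_ne_top _ _) (measure_mono (subset_univ _))

lemma tailDist_add (μ ν : Measure ℝ) [IsFiniteMeasure μ] [IsFiniteMeasure ν] (x : ℝ) :
    tailDist (μ + ν) x = tailDist μ x + tailDist ν x := by
  simp [tailDist, ENNReal.toReal_add (measure_ne_top _ _) (measure_ne_top _ _)]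

lemma tailDist_restrict_Ioi (μ : Measure ℝ) (T x : ℝ) :
    tailDist (μ.restrict (Ioi T)) x = tailDist μ (max x T) := by
  rw [tailDist, Measure.restrict_apply measurableSet_Ioi, Ioi_inter_Ioi, tailDist]

lemma tailDist_restrict_le (μ : Measure ℝ) [IsFiniteMeasure μ] (s : Set ℝ) (x : ℝ) :
    tailDist (μ.restrict s) x ≤ tailDist μ x :=
  ENNReal.toReal_mono (measure_ne_top _ _) (Measure.restrict_apply_le _ _)

/-- Tail of a convolution as an integral. -/
lemma tail_conv (ρ σ : Measure ℝ) [IsFiniteMeasure ρ] [IsFiniteMeasure σ] (x : ℝ) :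
    tailDist (convDist ρ σ) x = ∫ u, tailDist σ (x - u) ∂ρ := by
  have hmeas : Measurable (fun p : ℝ × ℝ => p.1 + p.2) := measurable_add
  rw [convDist, tailDist, Measure.map_apply hmeas measurableSet_Ioi]
  have h1 : (fun p : ℝ × ℝ => p.1 + p.2) ⁻¹' Ioi x = {p : ℝ × ℝ | x < p.1 + p.2} := rfl
  rw [h1, Measure.prod_apply (by exact measurableSet_lt measurable_const (by fun_prop))]
  have h2 : ∀ u : ℝ, (Prod.mk u ⁻¹' {p : ℝ × ℝ | x < p.1 + p.2}) = Ioi (x - u) := by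
    intro u; ext v; simp [sub_lt_iff_lt_add']
  simp_rw [h2]
  rw [← integral_toReal]
  · rfl
  · exact ((Antitone.measurable (fun a b hab => measure_mono (Ioi_subset_Ioi hab))).comp
      (measurable_const.sub measurable_id)).aemeasurable
  · exact Eventually.of_forall (fun u => measure_lt_top _ _)

lemma integrable_tail_sub (ρ σ : Measure ℝ) [IsFiniteMeasure ρ] [IsFiniteMeasure σ] (x : ℝ) :
    Integrable (fun u => tailDist σ (x - u)) ρ := by
  refine ⟨((tailDist_meas σ).comp (measurable_const.sub measurable_id)).aestronglyMeasurable, ?_⟩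
  refine HasFiniteIntegral.of_bounded (C := (σ univ).toReal) ?_
  refine Eventually.of_forall (fun u => ?_)
  rw [Real.norm_eq_abs, abs_of_nonneg (tailDist_nonneg _ _)]
  exact tailDist_le_mass _ _

lemma convDist_comm (μ ν : Measure ℝ) [SFinite μ] [SFinite ν] :
    convDist μ ν = convDist ν μ := by
  rw [convDist_eq_conv, convDist_eq_conv, Measure.conv_comm]

/-- `∫_{(T,∞)} e^{αu} dμ → 0` as `T → ∞`. -/
lemma tendsto_tail_mgf (α : ℝ) (μ : Measure ℝ) [IsFiniteMeasure μ]
    (hint : Integrable (fun u => Real.exp (α * u)) μ) :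
    Tendsto (fun T => ∫ u in Ioi T, Real.exp (α * u) ∂μ) atTop (nhds 0) := by
  have h0 : (0 : ℝ) = ∫ u, (0 : ℝ) ∂μ := by simp
  have heq : ∀ T : ℝ, ∫ u in Ioi T, Real.exp (α * u) ∂μ
      = ∫ u, (Ioi T).indicator (fun u => Real.exp (α * u)) u ∂μ := by
    intro T; rw [integral_indicator measurableSet_Ioi]
  simp_rw [heq]
  rw [h0]
  refine tendsto_integral_filter_of_dominated_convergence (fun u => Real.exp (α * u))
    ?_ ?_ hint ?_
  · exact Eventually.of_forall fun T =>
      (hint.aestronglyMeasurable.indicator measurableSet_Ioi)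
  · refine Eventually.of_forall fun T => Eventually.of_forall fun u => ?_
    rw [Real.norm_eq_abs]
    by_cases h : u ∈ Ioi T
    · rw [indicator_of_mem h, abs_of_pos (Real.exp_pos _)]
    · rw [indicator_of_notMem h, abs_zero]; positivity
  · refine Eventually.of_forall fun u => ?_
    have : ∀ᶠ T in (atTop : Filter ℝ), (Ioi T).indicator (fun u => Real.exp (α * u)) u = 0 := by
      filter_upwards [eventually_ge_atTop u] with T hT
      simp [indicator_of_notMem, hT, not_lt.mpr hT]
    exact Tendsto.congr' (this.mono fun T h => h.symm) tendsto_const_nhds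

variable {α : ℝ} {V : Measure ℝ}

lemma ratio_int [IsFiniteMeasure V]
    (hpos : ∀ x, 0 < tailDist V x)
    (hlt : ∀ y : ℝ, Tendsto (fun x => tailDist V (x - y) / tailDist V x) atTop
      (nhds (Real.exp (α * y))))
    (W : Measure ℝ) [IsFiniteMeasure W] (T : ℝ) (h : ℝ → ℝ)
    (hmono : Antitone h) (h0 : ∀ t, 0 ≤ h t) (κ : ℝ)
    (hκ : Tendsto (fun t => h t / tailDist V t) atTop (nhds κ)) :
    Tendsto (fun x => (∫ u in Iic T, h (x - u) ∂W) / tailDist V x) atTop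
      (nhds (κ * ∫ u in Iic T, Real.exp (α * u) ∂W)) := by
  have hκ0 : 0 ≤ κ := ge_of_tendsto hκ (Eventually.of_forall fun t =>
    div_nonneg (h0 t) (tailDist_nonneg _ _))
  have hcomp : ∀ᶠ t in atTop, h t ≤ (κ + 1) * tailDist V t := by
    filter_upwards [hκ.eventually (gt_mem_nhds (lt_add_one κ))] with t ht
    exact le_of_lt ((div_lt_iff₀ (hpos t)).mp ht)
  obtain ⟨t₀, ht₀⟩ := eventually_atTop.mp hcomp
  have hlt' : ∀ᶠ x in atTop,
      tailDist V (x - T) ≤ (Real.exp (α * T) + 1) * tailDist V x := by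
    filter_upwards [(hlt T).eventually (gt_mem_nhds (lt_add_one _))] with x hx
    exact le_of_lt ((div_lt_iff₀ (hpos x)).mp hx)
  have heq : ∀ x : ℝ, (∫ u in Iic T, h (x - u) ∂W) / tailDist V x
      = ∫ u in Iic T, h (x - u) / tailDist V x ∂W := fun x => (integral_div _ _).symm
  simp_rw [heq]
  have hlim : (κ * ∫ u in Iic T, Real.exp (α * u) ∂W)
      = ∫ u in Iic T, κ * Real.exp (α * u) ∂W := (integral_const_mul _ _).symm
  rw [hlim]
  refine tendsto_integral_filter_of_dominated_convergence
    (fun _ => (κ + 1) * ((Real.exp (α * T) + 1) * 1)) ?_ ?_ (integrable_const _) ?_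
  · exact Eventually.of_forall fun x =>
      ((hmono.measurable.comp (measurable_const.sub measurable_id)).div_const
        _).aestronglyMeasurable
  · filter_upwards [eventually_ge_atTop (t₀ + T), hlt'] with x hx hx2
    refine (ae_restrict_mem measurableSet_Iic).mono fun u hu => ?_
    rw [Real.norm_eq_abs, abs_of_nonneg (div_nonneg (h0 _) (tailDist_nonneg _ _)),
      div_le_iff₀ (hpos x)]
    calc h (x - u) ≤ h (x - T) := hmono (by simp only [mem_Iic] at hu; linarith)
      _ ≤ (κ + 1) * tailDist V (x - T) := ht₀ _ (by linarith)
      _ ≤ (κ + 1) * ((Real.exp (α * T) + 1) * tailDist V x) :=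
          mul_le_mul_of_nonneg_left hx2 (by linarith)
      _ = (κ + 1) * ((Real.exp (α * T) + 1) * 1) * tailDist V x := by ring
  · refine Eventually.of_forall fun u => ?_
    have h1 : Tendsto (fun x : ℝ => x - u) atTop atTop := by
      simp_rw [sub_eq_add_neg]
      exact tendsto_atTop_add_const_right atTop (-u) tendsto_id
    refine ((hκ.comp h1).mul (hlt u)).congr fun x => ?_
    have hb : tailDist V (x - u) ≠ 0 := (hpos _).ne'
    rw [Function.comp_apply]
    field_simp

lemma bigTwo (Q : Measure ℝ) [IsProbabilityMeasure Q]
    (hpos : ∀ x, 0 < tailDist Q x)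
    (hlt : ∀ y : ℝ, Tendsto (fun x => tailDist Q (x - y) / tailDist Q x) atTop
      (nhds (Real.exp (α * y))))
    (hint : Integrable (fun u => Real.exp (α * u)) Q)
    (hconv : Tendsto (fun x => tailDist (convDist Q Q) x / tailDist Q x) atTop
      (nhds (2 * ∫ u, Real.exp (α * u) ∂Q))) (T : ℝ) :
    Tendsto (fun x => tailDist (convDist (Q.restrict (Ioi T)) (Q.restrict (Ioi T))) x
        / tailDist Q x) atTop (nhds (2 * ∫ u in Ioi T, Real.exp (α * u) ∂Q)) := by
  set A := Q.restrict (Iic T) with hA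
  set B := Q.restrict (Ioi T) with hB
  have hQr : A + B = Q := by
    rw [hA, hB, ← compl_Iic]
    exact Measure.restrict_add_restrict_compl measurableSet_Iic
  have hdec : convDist A Q + (convDist B A + convDist B B) = convDist Q Q := by
    simp only [convDist_eq_conv]
    rw [← Measure.conv_add, hQr, ← Measure.add_conv, hQr]
  have htail : ∀ x, tailDist (convDist B B) x / tailDist Q x
      = tailDist (convDist Q Q) x / tailDist Q x
        - tailDist (convDist A Q) x / tailDist Q x
        - tailDist (convDist B A) x / tailDist Q x := by
    intro x
    rw [← hdec, tailDist_add, tailDist_add]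
    ring
  have hone : Tendsto (fun t => tailDist Q t / tailDist Q t) atTop (nhds 1) :=
    tendsto_const_nhds.congr fun t => (div_self (hpos t).ne').symm
  have h1 : Tendsto (fun x => tailDist (convDist A Q) x / tailDist Q x) atTop
      (nhds (1 * ∫ u in Iic T, Real.exp (α * u) ∂Q)) := by
    refine (ratio_int hpos hlt Q T (tailDist Q) (tailDist_anti Q) (tailDist_nonneg Q) 1
      hone).congr fun x => ?_
    rw [tail_conv A Q x]
  have hBone : Tendsto (fun t => tailDist B t / tailDist Q t) atTop (nhds 1) := by
    refine hone.congr' ?_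
    filter_upwards [eventually_ge_atTop T] with t ht
    rw [hB, tailDist_restrict_Ioi, max_eq_left ht]
  have h2 : Tendsto (fun x => tailDist (convDist B A) x / tailDist Q x) atTop
      (nhds (1 * ∫ u in Iic T, Real.exp (α * u) ∂Q)) := by
    refine (ratio_int hpos hlt Q T (tailDist B) (tailDist_anti B) (tailDist_nonneg B) 1
      hBone).congr fun x => ?_
    rw [convDist_comm B A, tail_conv A B x]
  have hsplit : (∫ u in Iic T, Real.exp (α * u) ∂Q) + (∫ u in Ioi T, Real.exp (α * u) ∂Q)
      = ∫ u, Real.exp (α * u) ∂Q := by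
    rw [← compl_Iic]
    exact integral_add_compl measurableSet_Iic hint
  have hfin := (hconv.sub h1).sub h2
  have : (2 * ∫ u, Real.exp (α * u) ∂Q) - 1 * (∫ u in Iic T, Real.exp (α * u) ∂Q)
      - 1 * (∫ u in Iic T, Real.exp (α * u) ∂Q) = 2 * ∫ u in Ioi T, Real.exp (α * u) ∂Q := by
    linarith
  rw [this] at hfin
  exact hfin.congr fun x => (htail x).symm

lemma truncated_mgf_tendsto (μ : Measure ℝ) [IsFiniteMeasure μ]
    (hμ : Integrable (fun u => Real.exp (α * u)) μ) :
    Tendsto (fun T => ∫ u in Iic T, Real.exp (α * u) ∂μ) atTop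
      (nhds (∫ u, Real.exp (α * u) ∂μ)) := by
  have h0 := tendsto_tail_mgf α μ hμ
  have heq : ∀ T : ℝ, ∫ u in Iic T, Real.exp (α * u) ∂μ
      = (∫ u, Real.exp (α * u) ∂μ) - ∫ u in Ioi T, Real.exp (α * u) ∂μ := by
    intro T
    have h := integral_add_compl (measurableSet_Iic (a := T)) hμ
    rw [compl_Iic] at h
    linarith
  simp_rw [heq]
  simpa using tendsto_const_nhds.sub h0

lemma conv2 [IsProbabilityMeasure V]
    (hpos : ∀ x, 0 < tailDist V x)
    (hlt : ∀ y : ℝ, Tendsto (fun x => tailDist V (x - y) / tailDist V x) atTop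
      (nhds (Real.exp (α * y))))
    (hBig : ∀ T : ℝ, 0 ≤ T → Tendsto (fun x =>
        tailDist (convDist (V.restrict (Ioi T)) (V.restrict (Ioi T))) x / tailDist V x) atTop
        (nhds (2 * ∫ u in Ioi T, Real.exp (α * u) ∂V)))
    (hβ0 : Tendsto (fun T => ∫ u in Ioi T, Real.exp (α * u) ∂V) atTop (nhds 0))
    (U W : Measure ℝ) [IsFiniteMeasure U] [IsFiniteMeasure W] (k l : ℝ)
    (hU : Tendsto (fun x => tailDist U x / tailDist V x) atTop (nhds k))
    (hW : Tendsto (fun x => tailDist W x / tailDist V x) atTop (nhds l))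
    (hUi : Integrable (fun u => Real.exp (α * u)) U)
    (hWi : Integrable (fun u => Real.exp (α * u)) W) :
    Tendsto (fun x => tailDist (convDist U W) x / tailDist V x) atTop
      (nhds (k * (∫ u, Real.exp (α * u) ∂W) + l * (∫ u, Real.exp (α * u) ∂U))) := by
  have hk0 : 0 ≤ k := ge_of_tendsto hU (Eventually.of_forall fun t =>
    div_nonneg (tailDist_nonneg _ _) (tailDist_nonneg _ _))
  have hl0 : 0 ≤ l := ge_of_tendsto hW (Eventually.of_forall fun t =>
    div_nonneg (tailDist_nonneg _ _) (tailDist_nonneg _ _))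
  set K := (k + 1) * (l + 1) with hK
  have hKpos : 0 < K := mul_pos (by linarith) (by linarith)
  set L := k * (∫ u, Real.exp (α * u) ∂W) + l * (∫ u, Real.exp (α * u) ∂U) with hL
  rw [Metric.tendsto_nhds]
  intro ε hε
  set δ := ε / 7 with hδ
  have hδpos : 0 < δ := by positivity
  have hU' : ∀ᶠ t in atTop, tailDist U t ≤ (k + 1) * tailDist V t := by
    filter_upwards [hU.eventually (gt_mem_nhds (lt_add_one k))] with t ht
    exact le_of_lt ((div_lt_iff₀ (hpos t)).mp ht)
  have hW' : ∀ᶠ t in atTop, tailDist W t ≤ (l + 1) * tailDist V t := by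
    filter_upwards [hW.eventually (gt_mem_nhds (lt_add_one l))] with t ht
    exact le_of_lt ((div_lt_iff₀ (hpos t)).mp ht)
  obtain ⟨aU, haU⟩ := eventually_atTop.mp hU'
  obtain ⟨aW, haW⟩ := eventually_atTop.mp hW'
  have hsel : ∀ᶠ T in atTop, (0:ℝ) ≤ T ∧ aU ≤ T ∧ aW ≤ T
      ∧ |l * ∫ u in Iic T, Real.exp (α * u) ∂U - l * ∫ u, Real.exp (α * u) ∂U| < δ
      ∧ |k * ∫ u in Iic T, Real.exp (α * u) ∂W - k * ∫ u, Real.exp (α * u) ∂W| < δ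
      ∧ K * (2 * ∫ u in Ioi T, Real.exp (α * u) ∂V) < δ := by
    have h1 := Metric.tendsto_nhds.mp ((truncated_mgf_tendsto U hUi).const_mul l) δ hδpos
    have h2 := Metric.tendsto_nhds.mp ((truncated_mgf_tendsto W hWi).const_mul k) δ hδpos
    have h3 : Tendsto (fun T => K * (2 * ∫ u in Ioi T, Real.exp (α * u) ∂V)) atTop
        (nhds 0) := by
      have := (hβ0.const_mul 2).const_mul K
      simpa using this
    have h3' := Metric.tendsto_nhds.mp h3 δ hδpos
    filter_upwards [eventually_ge_atTop (0:ℝ), eventually_ge_atTop aU, eventually_ge_atTop aW,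
      h1, h2, h3'] with T p0 p1 p2 p3 p4 p5
    refine ⟨p0, p1, p2, by simpa [Real.dist_eq] using p3, by simpa [Real.dist_eq] using p4, ?_⟩
    have := p5
    rw [Real.dist_eq, sub_zero] at this
    calc K * (2 * ∫ u in Ioi T, Real.exp (α * u) ∂V) ≤ |K * (2 * ∫ u in Ioi T, Real.exp (α * u) ∂V)| := le_abs_self _
      _ < δ := this
  obtain ⟨T, hT0, hTU', hTW', hbU, hbW, hbV⟩ := hsel.exists
  have hTU : ∀ t, T ≤ t → tailDist U t ≤ (k + 1) * tailDist V t := fun t ht =>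
    haU t (le_trans hTU' ht)
  have hTW : ∀ t, T ≤ t → tailDist W t ≤ (l + 1) * tailDist V t := fun t ht =>
    haW t (le_trans hTW' ht)
  -- decomposition
  set A1 := convDist (U.restrict (Iic T)) W with hA1
  set B1 := convDist (U.restrict (Ioi T)) (W.restrict (Iic T)) with hB1
  set C1 := convDist (U.restrict (Ioi T)) (W.restrict (Ioi T)) with hC1
  have hUr : U.restrict (Iic T) + U.restrict (Ioi T) = U := by
    rw [← compl_Iic]; exact Measure.restrict_add_restrict_compl measurableSet_Iic
  have hWr : W.restrict (Iic T) + W.restrict (Ioi T) = W := by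
    rw [← compl_Iic]; exact Measure.restrict_add_restrict_compl measurableSet_Iic
  have hdec : A1 + (B1 + C1) = convDist U W := by
    simp only [hA1, hB1, hC1, convDist_eq_conv]
    rw [← Measure.conv_add, hWr, ← Measure.add_conv, hUr]
  -- limits for A and B pieces
  have hA : Tendsto (fun x => tailDist A1 x / tailDist V x) atTop
      (nhds (l * ∫ u in Iic T, Real.exp (α * u) ∂U)) := by
    refine (ratio_int hpos hlt U T (tailDist W) (tailDist_anti W) (tailDist_nonneg W) l
      hW).congr fun x => ?_
    rw [hA1, tail_conv]
  have hUratio : Tendsto (fun t => tailDist (U.restrict (Ioi T)) t / tailDist V t) atTop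
      (nhds k) := by
    refine hU.congr' ?_
    filter_upwards [eventually_ge_atTop T] with t ht
    rw [tailDist_restrict_Ioi, max_eq_left ht]
  have hB : Tendsto (fun x => tailDist B1 x / tailDist V x) atTop
      (nhds (k * ∫ u in Iic T, Real.exp (α * u) ∂W)) := by
    refine (ratio_int hpos hlt W T (tailDist (U.restrict (Ioi T)))
      (tailDist_anti _) (tailDist_nonneg _) k hUratio).congr fun x => ?_
    rw [hB1, convDist_comm, tail_conv]
  -- bound for the C piece
  have hCb : ∀ x, tailDist C1 x
      ≤ K * tailDist (convDist (V.restrict (Ioi T)) (V.restrict (Ioi T))) x := by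
    intro x
    have s1 : tailDist C1 x
        ≤ (l + 1) * tailDist (convDist (U.restrict (Ioi T)) (V.restrict (Ioi T))) x := by
      rw [hC1, tail_conv, tail_conv, ← integral_const_mul]
      refine integral_mono (integrable_tail_sub _ _ x)
        ((integrable_tail_sub _ _ x).const_mul _) fun u => ?_
      simp only [tailDist_restrict_Ioi]
      exact hTW _ (le_max_right _ _)
    have s2 : tailDist (convDist (U.restrict (Ioi T)) (V.restrict (Ioi T))) x
        ≤ (k + 1) * tailDist (convDist (V.restrict (Ioi T)) (V.restrict (Ioi T))) x := by
      rw [convDist_comm, tail_conv, tail_conv, ← integral_const_mul]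
      refine integral_mono (integrable_tail_sub _ _ x)
        ((integrable_tail_sub _ _ x).const_mul _) fun u => ?_
      simp only [tailDist_restrict_Ioi]
      exact hTU _ (le_max_right _ _)
    calc tailDist C1 x ≤ (l + 1) * tailDist (convDist (U.restrict (Ioi T)) (V.restrict (Ioi T))) x := s1
      _ ≤ (l + 1) * ((k + 1) * tailDist (convDist (V.restrict (Ioi T)) (V.restrict (Ioi T))) x) :=
          mul_le_mul_of_nonneg_left s2 (by linarith)
      _ = K * tailDist (convDist (V.restrict (Ioi T)) (V.restrict (Ioi T))) x := by
          rw [hK]; ring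
  have hCsmall : ∀ᶠ x in atTop, tailDist C1 x / tailDist V x < 2 * δ := by
    have h3 := Metric.tendsto_nhds.mp (hBig T hT0) (δ / K) (by positivity)
    filter_upwards [h3] with x hx
    rw [Real.dist_eq] at hx
    have hx' : tailDist (convDist (V.restrict (Ioi T)) (V.restrict (Ioi T))) x / tailDist V x
        < 2 * (∫ u in Ioi T, Real.exp (α * u) ∂V) + δ / K := by
      have := abs_lt.mp hx
      linarith [this.2]
    have hdd : tailDist C1 x / tailDist V x
        ≤ K * (tailDist (convDist (V.restrict (Ioi T)) (V.restrict (Ioi T))) x / tailDist V x) := by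
      rw [← mul_div_assoc]
      exact div_le_div_of_nonneg_right (hCb x) (hpos x).le |>.trans le_rfl
    calc tailDist C1 x / tailDist V x
        ≤ K * (tailDist (convDist (V.restrict (Ioi T)) (V.restrict (Ioi T))) x / tailDist V x) := hdd
      _ < K * (2 * (∫ u in Ioi T, Real.exp (α * u) ∂V) + δ / K) :=
          (mul_lt_mul_of_pos_left hx' hKpos)
      _ = K * (2 * ∫ u in Ioi T, Real.exp (α * u) ∂V) + δ := by
          field_simp
      _ < 2 * δ := by linarith
  -- final epsilon assembly
  have hAd := Metric.tendsto_nhds.mp hA δ hδpos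
  have hBd := Metric.tendsto_nhds.mp hB δ hδpos
  filter_upwards [hAd, hBd, hCsmall] with x h1 h2 h3
  have hsum : tailDist (convDist U W) x / tailDist V x
      = tailDist A1 x / tailDist V x + tailDist B1 x / tailDist V x
        + tailDist C1 x / tailDist V x := by
    rw [← hdec, tailDist_add, tailDist_add]
    ring
  rw [Real.dist_eq] at h1 h2 ⊢
  rw [hsum]
  have hCn : 0 ≤ tailDist C1 x / tailDist V x :=
    div_nonneg (tailDist_nonneg _ _) (tailDist_nonneg _ _)
  rw [abs_lt] at h1 h2
  have h4 := abs_lt.mp hbU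
  have h5 := abs_lt.mp hbW
  rw [abs_lt]
  constructor <;> linarith [h1.1, h1.2, h2.1, h2.2, h4.1, h4.2, h5.1, h5.2]



lemma measurable_posMod_fun : Measurable (fun x : ℝ => max x 0) :=
  measurable_id.max measurable_const

instance instPosModProb (μ : Measure ℝ) [IsProbabilityMeasure μ] :
    IsProbabilityMeasure (posMod μ) :=
  Measure.isProbabilityMeasure_map measurable_posMod_fun.aemeasurable

lemma posMod_tail (Vm : Measure ℝ) {x : ℝ} (hx : 0 ≤ x) :
    tailDist (posMod Vm) x = tailDist Vm x := by
  rw [tailDist, posMod, Measure.map_apply measurable_posMod_fun measurableSet_Ioi]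
  congr 2
  ext a
  simp only [mem_preimage, mem_Ioi, lt_max_iff]
  constructor
  · rintro (h | h)
    · exact h
    · linarith
  · exact fun h => Or.inl h

lemma posMod_restrict (Vm : Measure ℝ) {T : ℝ} (hT : 0 ≤ T) :
    (posMod Vm).restrict (Ioi T) = Vm.restrict (Ioi T) := by
  ext s hs
  rw [Measure.restrict_apply hs, Measure.restrict_apply hs, posMod,
    Measure.map_apply measurable_posMod_fun (hs.inter measurableSet_Ioi)]
  congr 1
  ext a
  simp only [mem_preimage, mem_inter_iff, mem_Ioi]
  constructor
  · rintro ⟨h1, h2⟩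
    have ha : 0 < a := by
      by_contra h
      push_neg at h
      rw [max_eq_right h] at h2
      linarith
    rw [max_eq_left ha.le] at h1 h2
    exact ⟨h1, h2⟩
  · rintro ⟨h1, h2⟩
    have ha : 0 < a := lt_of_le_of_lt hT h2
    rw [max_eq_left ha.le]
    exact ⟨h1, h2⟩

variable {α : ℝ}

lemma package (V : Measure ℝ) [IsProbabilityMeasure V] (hα : 0 ≤ α) (hV : MemCE α V) :
    (∀ x, 0 < tailDist V x) ∧
    (∀ y : ℝ, Tendsto (fun x => tailDist V (x - y) / tailDist V x) atTop
      (nhds (Real.exp (α * y)))) ∧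
    Integrable (fun u => Real.exp (α * u)) V ∧
    (∀ T : ℝ, 0 ≤ T → Tendsto (fun x =>
        tailDist (convDist (V.restrict (Ioi T)) (V.restrict (Ioi T))) x / tailDist V x) atTop
        (nhds (2 * ∫ u in Ioi T, Real.exp (α * u) ∂V))) := by
  obtain ⟨hpos, hlt, hint, hconv⟩ := hV
  have hposV : ∀ x, 0 < tailDist V x := by
    intro x
    have h1 := hpos (max x 0)
    rw [posMod_tail V (le_max_right x 0)] at h1
    exact lt_of_lt_of_le h1 (tailDist_anti V (le_max_left x 0))
  have hltV : ∀ y : ℝ, Tendsto (fun x => tailDist V (x - y) / tailDist V x) atTop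
      (nhds (Real.exp (α * y))) := by
    intro y
    refine (hlt y).congr' ?_
    filter_upwards [eventually_ge_atTop (max 0 y)] with x hx
    have hx0 : 0 ≤ x := le_trans (le_max_left 0 y) hx
    have hxy : 0 ≤ x - y := by
      have := le_trans (le_max_right 0 y) hx
      linarith
    rw [posMod_tail V hxy, posMod_tail V hx0]
  have hintV : Integrable (fun u => Real.exp (α * u)) V := by
    have h1 : Integrable ((fun u => Real.exp (α * u)) ∘ (fun a : ℝ => max a 0)) V :=
      (integrable_map_measure hint.aestronglyMeasurable
        measurable_posMod_fun.aemeasurable).mp hint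
    refine Integrable.mono h1 ?_ ?_
    · exact (Real.continuous_exp.comp (continuous_const.mul continuous_id)).aestronglyMeasurable
    · refine Eventually.of_forall fun a => ?_
      simp only [Function.comp_apply, Real.norm_eq_abs, Real.abs_exp]
      exact Real.exp_le_exp.mpr (mul_le_mul_of_nonneg_left (le_max_left a 0) hα)
  refine ⟨hposV, hltV, hintV, ?_⟩
  intro T hT
  have hbig := bigTwo (α := α) (posMod V) hpos hlt hint hconv T
  rw [posMod_restrict V hT] at hbig
  refine hbig.congr' ?_
  filter_upwards [eventually_ge_atTop (0:ℝ)] with x hx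
  rw [posMod_tail V hx]

lemma measurable_sumFin (k : ℕ) : Measurable (fun y : Fin k → ℝ => ∑ i, y i) := by fun_prop

lemma mgf_conv (α : ℝ) (ρ σ : Measure ℝ) [IsFiniteMeasure ρ] [IsFiniteMeasure σ]
    (hρ : Integrable (fun u => Real.exp (α * u)) ρ)
    (hσ : Integrable (fun u => Real.exp (α * u)) σ) :
    Integrable (fun u => Real.exp (α * u)) (convDist ρ σ) ∧
      ∫ u, Real.exp (α * u) ∂(convDist ρ σ)
        = (∫ u, Real.exp (α * u) ∂ρ) * (∫ u, Real.exp (α * u) ∂σ) := by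
  have hmeas : Measurable (fun p : ℝ × ℝ => p.1 + p.2) := measurable_add
  have haesm : AEStronglyMeasurable (fun u : ℝ => Real.exp (α * u)) (convDist ρ σ) :=
    (Real.continuous_exp.comp (continuous_const.mul continuous_id)).aestronglyMeasurable
  have hprod : Integrable (fun p : ℝ × ℝ => Real.exp (α * p.1) * Real.exp (α * p.2))
      (ρ.prod σ) := hρ.mul_prod hσ
  have hcomp : ((fun u : ℝ => Real.exp (α * u)) ∘ (fun p : ℝ × ℝ => p.1 + p.2))
      = fun p : ℝ × ℝ => Real.exp (α * p.1) * Real.exp (α * p.2) := by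
    funext p
    simp [Function.comp, mul_add, Real.exp_add]
  constructor
  · rw [convDist]
    rw [integrable_map_measure haesm hmeas.aemeasurable, hcomp]
    exact hprod
  · rw [convDist, integral_map hmeas.aemeasurable haesm]
    calc ∫ p : ℝ × ℝ, Real.exp (α * (p.1 + p.2)) ∂(ρ.prod σ)
        = ∫ p : ℝ × ℝ, Real.exp (α * p.1) * Real.exp (α * p.2) ∂(ρ.prod σ) := by
          simp_rw [mul_add, Real.exp_add]
      _ = (∫ u, Real.exp (α * u) ∂ρ) * (∫ u, Real.exp (α * u) ∂σ) :=
          integral_prod_mul (fun u => Real.exp (α * u)) (fun u => Real.exp (α * u))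

lemma pk_succ (V : Measure ℝ) [IsProbabilityMeasure V] (k : ℕ) :
    (Measure.pi (fun _ : Fin (k+1) => V)).map (fun y => ∑ i, y i)
      = convDist V ((Measure.pi (fun _ : Fin k => V)).map (fun y => ∑ i, y i)) := by
  have h := measurePreserving_piFinSuccAbove (fun _ : Fin (k+1) => V) 0
  have hmap : Measure.pi (fun _ : Fin (k+1) => V)
      = ((V.prod (Measure.pi (fun _ : Fin k => V))).map
          (MeasurableEquiv.piFinSuccAbove (fun _ : Fin (k+1) => ℝ) 0).symm) := by
    exact (h.symm _).map_eq.symm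
  rw [hmap, Measure.map_map (measurable_sumFin (k+1))
    (MeasurableEquiv.piFinSuccAbove (fun _ : Fin (k+1) => ℝ) 0).symm.measurable]
  have hfun : ((fun y : Fin (k+1) → ℝ => ∑ i, y i)
      ∘ (MeasurableEquiv.piFinSuccAbove (fun _ : Fin (k+1) => ℝ) 0).symm)
      = fun p : ℝ × (Fin k → ℝ) => p.1 + ∑ j, p.2 j := by
    funext p
    simp only [Function.comp_apply, MeasurableEquiv.piFinSuccAbove_symm_apply]
    rw [Fin.sum_univ_succAbove _ 0]
    simp
  rw [hfun]
  -- now massage RHS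
  have h2 : convDist V ((Measure.pi (fun _ : Fin k => V)).map (fun y => ∑ i, y i))
      = (V.prod (Measure.pi (fun _ : Fin k => V))).map
          (fun p : ℝ × (Fin k → ℝ) => p.1 + ∑ j, p.2 j) := by
    rw [convDist]
    have h3 : V.prod ((Measure.pi (fun _ : Fin k => V)).map (fun y => ∑ i, y i))
        = (V.prod (Measure.pi (fun _ : Fin k => V))).map
            (Prod.map id (fun y => ∑ i, y i)) := by
      rw [← Measure.map_prod_map _ _ measurable_id (measurable_sumFin k), Measure.map_id]
    rw [h3, Measure.map_map measurable_add (measurable_id.prodMap (measurable_sumFin k))]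
    rfl
  rw [h2]

lemma pi_event_eq (k : ℕ) (V : Measure ℝ) [IsProbabilityMeasure V] (c x : ℝ) :
    (Measure.pi (fun _ : Fin (k+2) => V))
        {y | x < ∑ i, y i ∧ c < y ⟨0, by omega⟩ ∧ c < y ⟨1, by omega⟩}
      = (convDist (V.restrict (Ioi c)) (convDist (V.restrict (Ioi c))
          ((Measure.pi (fun _ : Fin k => V)).map (fun y => ∑ i, y i)))) (Ioi x) := by
  have hf : Measurable (fun p : ℝ × (ℝ × (Fin k → ℝ)) => p.1 + (p.2.1 + ∑ j, p.2.2 j)) := by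
    fun_prop
  have hq : Measurable (fun q : ℝ × (Fin k → ℝ) => q.1 + ∑ j, q.2 j) := by fun_prop
  have hS₂ : MeasurableSet {p : ℝ × (ℝ × (Fin k → ℝ)) |
      x < p.1 + (p.2.1 + ∑ j, p.2.2 j) ∧ c < p.1 ∧ c < p.2.1} :=
    (measurableSet_lt measurable_const hf).inter
      ((measurableSet_lt measurable_const measurable_fst).inter
        (measurableSet_lt measurable_const (measurable_fst.comp measurable_snd)))
  have h1 := measurePreserving_piFinSuccAbove (fun _ : Fin (k+2) => V) 0
  have h2 := measurePreserving_piFinSuccAbove (fun _ : Fin (k+1) => V) 0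
  have hg : MeasurePreserving
      (Prod.map (id : ℝ → ℝ) (MeasurableEquiv.piFinSuccAbove (fun _ : Fin (k+1) => ℝ) 0)
        ∘ (MeasurableEquiv.piFinSuccAbove (fun _ : Fin (k+2) => ℝ) 0))
      (Measure.pi (fun _ : Fin (k+2) => V))
      (V.prod (V.prod (Measure.pi (fun _ : Fin k => V)))) :=
    ((MeasurePreserving.id V).prod h2).comp h1
  have hSeq : {y : Fin (k+2) → ℝ | x < ∑ i, y i ∧ c < y ⟨0, by omega⟩ ∧ c < y ⟨1, by omega⟩}
      = (Prod.map (id : ℝ → ℝ) (MeasurableEquiv.piFinSuccAbove (fun _ : Fin (k+1) => ℝ) 0)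
        ∘ (MeasurableEquiv.piFinSuccAbove (fun _ : Fin (k+2) => ℝ) 0)) ⁻¹'
          {p : ℝ × (ℝ × (Fin k → ℝ)) |
            x < p.1 + (p.2.1 + ∑ j, p.2.2 j) ∧ c < p.1 ∧ c < p.2.1} := by
    ext y
    simp only [mem_preimage, Function.comp_apply, mem_setOf_eq,
      MeasurableEquiv.piFinSuccAbove_apply, Fin.insertNthEquiv_symm_apply, Fin.removeNth,
      Prod.map_apply, id_eq, Fin.zero_succAbove]
    rw [Fin.sum_univ_succ (f := fun i => y i), Fin.sum_univ_succ (f := fun i => y i.succ)]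
    have e0 : (⟨0, by omega⟩ : Fin (k+2)) = 0 := rfl
    have e1 : (⟨1, by omega⟩ : Fin (k+2)) = (0 : Fin (k+1)).succ := by
      simp [Fin.ext_iff]
    rw [e0, e1]
  rw [hSeq, hg.measure_preimage hS₂.nullMeasurableSet]
  have i1 : (V.restrict (Ioi c)).prod (Measure.pi (fun _ : Fin k => V))
      = (V.prod (Measure.pi (fun _ : Fin k => V))).restrict (Ioi c ×ˢ univ) := by
    rw [← Measure.prod_restrict, Measure.restrict_univ]
  have hprod1 : (V.restrict (Ioi c)).prod
        ((V.restrict (Ioi c)).prod (Measure.pi (fun _ : Fin k => V)))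
      = (V.prod (V.prod (Measure.pi (fun _ : Fin k => V)))).restrict
          (Ioi c ×ˢ (Ioi c ×ˢ univ)) := by
    rw [i1, Measure.prod_restrict]
  have hrest : (V.prod (V.prod (Measure.pi (fun _ : Fin k => V))))
        {p : ℝ × (ℝ × (Fin k → ℝ)) | x < p.1 + (p.2.1 + ∑ j, p.2.2 j) ∧ c < p.1 ∧ c < p.2.1}
      = ((V.restrict (Ioi c)).prod
          ((V.restrict (Ioi c)).prod (Measure.pi (fun _ : Fin k => V))))
          {p : ℝ × (ℝ × (Fin k → ℝ)) | x < p.1 + (p.2.1 + ∑ j, p.2.2 j)} := by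
    rw [hprod1, Measure.restrict_apply (measurableSet_lt measurable_const hf)]
    congr 1
    ext p
    simp only [mem_inter_iff, mem_setOf_eq, mem_prod, mem_Ioi, mem_univ, and_true]
  rw [hrest]
  have hstep1 : convDist (V.restrict (Ioi c))
        ((Measure.pi (fun _ : Fin k => V)).map (fun y => ∑ i, y i))
      = ((V.restrict (Ioi c)).prod (Measure.pi (fun _ : Fin k => V))).map
          (fun q : ℝ × (Fin k → ℝ) => q.1 + ∑ j, q.2 j) := by
    rw [convDist]
    have hh : (V.restrict (Ioi c)).prod
          ((Measure.pi (fun _ : Fin k => V)).map (fun y => ∑ i, y i))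
        = ((V.restrict (Ioi c)).prod (Measure.pi (fun _ : Fin k => V))).map
            (Prod.map id (fun y => ∑ i, y i)) := by
      rw [← Measure.map_prod_map _ _ measurable_id (measurable_sumFin k), Measure.map_id]
    rw [hh, Measure.map_map measurable_add (measurable_id.prodMap (measurable_sumFin k))]
    rfl
  have hconv : convDist (V.restrict (Ioi c)) (convDist (V.restrict (Ioi c))
        ((Measure.pi (fun _ : Fin k => V)).map (fun y => ∑ i, y i)))
      = ((V.restrict (Ioi c)).prod
          ((V.restrict (Ioi c)).prod (Measure.pi (fun _ : Fin k => V)))).map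
          (fun p : ℝ × (ℝ × (Fin k → ℝ)) => p.1 + (p.2.1 + ∑ j, p.2.2 j)) := by
    rw [hstep1, convDist]
    have hh : (V.restrict (Ioi c)).prod
          (((V.restrict (Ioi c)).prod (Measure.pi (fun _ : Fin k => V))).map
            (fun q : ℝ × (Fin k → ℝ) => q.1 + ∑ j, q.2 j))
        = ((V.restrict (Ioi c)).prod
            ((V.restrict (Ioi c)).prod (Measure.pi (fun _ : Fin k => V)))).map
            (Prod.map id (fun q : ℝ × (Fin k → ℝ) => q.1 + ∑ j, q.2 j)) := by
      rw [← Measure.map_prod_map _ _ measurable_id hq, Measure.map_id]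
    rw [hh, Measure.map_map measurable_add (measurable_id.prodMap hq)]
    rfl
  rw [hconv, Measure.map_apply hf measurableSet_Ioi]
  rfl

lemma pk_all (V : Measure ℝ) [IsProbabilityMeasure V]
    (hpos : ∀ x, 0 < tailDist V x)
    (hlt : ∀ y : ℝ, Tendsto (fun x => tailDist V (x - y) / tailDist V x) atTop
      (nhds (Real.exp (α * y))))
    (hBig : ∀ T : ℝ, 0 ≤ T → Tendsto (fun x =>
        tailDist (convDist (V.restrict (Ioi T)) (V.restrict (Ioi T))) x / tailDist V x) atTop
        (nhds (2 * ∫ u in Ioi T, Real.exp (α * u) ∂V)))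
    (hβ0 : Tendsto (fun T => ∫ u in Ioi T, Real.exp (α * u) ∂V) atTop (nhds 0))
    (hint : Integrable (fun u => Real.exp (α * u)) V) (k : ℕ) :
    Integrable (fun u => Real.exp (α * u))
        ((Measure.pi (fun _ : Fin k => V)).map (fun y => ∑ i, y i)) ∧
      (∫ u, Real.exp (α * u) ∂((Measure.pi (fun _ : Fin k => V)).map (fun y => ∑ i, y i)))
        = (∫ u, Real.exp (α * u) ∂V) ^ k ∧
      Tendsto (fun x =>
          tailDist ((Measure.pi (fun _ : Fin k => V)).map (fun y => ∑ i, y i)) x / tailDist V x)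
        atTop (nhds ((k : ℝ) * (∫ u, Real.exp (α * u) ∂V) ^ (k - 1))) := by
  induction k with
  | zero =>
    have hz : (Measure.pi (fun _ : Fin 0 => V)).map (fun y => ∑ i, y i)
        = Measure.dirac (0 : ℝ) := by
      have hf : (fun y : Fin 0 → ℝ => ∑ i, y i) = fun _ => (0:ℝ) := by
        funext y; simp
      rw [hf, Measure.map_const, measure_univ, one_smul]
    rw [hz]
    refine ⟨?_, ?_, ?_⟩
    · refine ⟨(Real.continuous_exp.comp
        (continuous_const.mul continuous_id)).stronglyMeasurable.aestronglyMeasurable, ?_⟩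
      rw [HasFiniteIntegral, lintegral_dirac]
      exact ENNReal.coe_lt_top
    · rw [integral_dirac]
      simp
    · have hev : ∀ᶠ x in (atTop : Filter ℝ), tailDist (Measure.dirac (0:ℝ)) x / tailDist V x = 0 := by
        filter_upwards [eventually_ge_atTop (0:ℝ)] with x hx
        have : Measure.dirac (0:ℝ) (Ioi x) = 0 := by
          rw [Measure.dirac_apply' _ measurableSet_Ioi]
          simp [indicator_of_notMem, not_lt.mpr hx]
        rw [tailDist, this]
        simp
      have h0 : ((0 : ℕ) : ℝ) * (∫ u, Real.exp (α * u) ∂V) ^ (0 - 1) = 0 := by simp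
      rw [h0]
      exact tendsto_const_nhds.congr' (hev.mono fun x h => h.symm)
  | succ n ih =>
    obtain ⟨ih1, ih2, ih3⟩ := ih
    haveI hprob : IsProbabilityMeasure
        ((Measure.pi (fun _ : Fin n => V)).map (fun y => ∑ i, y i)) :=
      Measure.isProbabilityMeasure_map (measurable_sumFin n).aemeasurable
    have hone : Tendsto (fun t => tailDist V t / tailDist V t) atTop (nhds 1) :=
      tendsto_const_nhds.congr fun t => (div_self (hpos t).ne').symm
    have hc := conv2 hpos hlt hBig hβ0 V
      ((Measure.pi (fun _ : Fin n => V)).map (fun y => ∑ i, y i)) 1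
      ((n : ℝ) * (∫ u, Real.exp (α * u) ∂V) ^ (n - 1)) hone ih3 hint ih1
    have hm := mgf_conv α V ((Measure.pi (fun _ : Fin n => V)).map (fun y => ∑ i, y i)) hint ih1
    rw [pk_succ]
    refine ⟨hm.1, ?_, ?_⟩
    · rw [hm.2, ih2, ← pow_succ']
    · rw [ih2] at hc
      have hval : 1 * ((∫ u, Real.exp (α * u) ∂V) ^ n)
          + ((n : ℝ) * (∫ u, Real.exp (α * u) ∂V) ^ (n - 1)) * (∫ u, Real.exp (α * u) ∂V)
          = ((n + 1 : ℕ) : ℝ) * (∫ u, Real.exp (α * u) ∂V) ^ ((n + 1) - 1) := by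
        cases n with
        | zero => simp
        | succ p =>
          simp only [Nat.add_sub_cancel]
          push_cast
          rw [pow_succ]
          ring
      rw [hval] at hc
      exact hc

end CEAux
end

/-- Lemma 3.1: for `n ≥ 2` i.i.d. random variables with common distribution `V ∈ S(α)`,
`lim_{c→∞} lim_{x→∞} Pr(Σ ηᵢ > x, η₁ > c, η₂ > c)/V̄(x) = 0`. -/
theorem stmt_8
    {Ω : Type*} [MeasurableSpace Ω] (P : Measure Ω) [IsProbabilityMeasure P]
    (n : ℕ) (hn : 2 ≤ n)
    (V : Measure ℝ) [IsProbabilityMeasure V]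
    (η : Fin n → Ω → ℝ)
    (hm : ∀ i, Measurable (η i))
    (hlaw : ∀ i, P.map (η i) = V)
    (hIndep : iIndepFun η P)
    (α : ℝ) (hα : 0 ≤ α) (hV : MemCE α V) :
    ∃ L : ℝ → ℝ,
      (∀ c : ℝ, Tendsto (fun x =>
          (P {ω | x < ∑ i, η i ω ∧ c < η ⟨0, by omega⟩ ω ∧ c < η ⟨1, by omega⟩ ω}).toReal
            / tailDist V x) atTop (nhds (L c))) ∧
      Tendsto L atTop (nhds 0) := by
  obtain ⟨k, rfl⟩ : ∃ k, n = k + 2 := ⟨n - 2, by omega⟩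
  obtain ⟨hpos, hlt, hint, hBig⟩ := CEAux.package V hα hV
  have hβ0 := CEAux.tendsto_tail_mgf α V hint
  obtain ⟨hPk1, hPk2, hPk3⟩ := CEAux.pk_all V hpos hlt hBig hβ0 hint k
  haveI hPkprob : IsProbabilityMeasure
      ((Measure.pi (fun _ : Fin k => V)).map (fun y => ∑ i, y i)) :=
    Measure.isProbabilityMeasure_map (CEAux.measurable_sumFin k).aemeasurable
  have hjoint : P.map (fun ω i => η i ω) = Measure.pi (fun _ : Fin (k+2) => V) := by
    have hmeasf : Measurable (fun ω i => η i ω) := measurable_pi_lambda _ hm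
    refine (Measure.pi_eq fun s hs => ?_).symm
    rw [Measure.map_apply hmeasf (MeasurableSet.univ_pi hs)]
    have hpre : (fun ω i => η i ω) ⁻¹' (Set.univ.pi s) = ⋂ i ∈ Finset.univ, η i ⁻¹' s i := by
      ext ω; simp [Set.mem_pi]
    rw [hpre, hIndep.measure_inter_preimage_eq_mul Finset.univ (fun i _ => hs i)]
    refine Finset.prod_congr rfl fun i _ => ?_
    rw [← hlaw i, Measure.map_apply (hm i) (hs i)]
  have hev : ∀ c x : ℝ,
      (P {ω | x < ∑ i, η i ω ∧ c < η ⟨0, by omega⟩ ω ∧ c < η ⟨1, by omega⟩ ω})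
        = (convDist (V.restrict (Set.Ioi c)) (convDist (V.restrict (Set.Ioi c))
            ((Measure.pi (fun _ : Fin k => V)).map (fun y => ∑ i, y i)))) (Set.Ioi x) := by
    intro c x
    have hS : MeasurableSet {y : Fin (k+2) → ℝ |
        x < ∑ i, y i ∧ c < y ⟨0, by omega⟩ ∧ c < y ⟨1, by omega⟩} :=
      (measurableSet_lt measurable_const (CEAux.measurable_sumFin (k+2))).inter
        ((measurableSet_lt measurable_const (measurable_pi_apply _)).inter
          (measurableSet_lt measurable_const (measurable_pi_apply _)))
    have hpre : {ω | x < ∑ i, η i ω ∧ c < η ⟨0, by omega⟩ ω ∧ c < η ⟨1, by omega⟩ ω}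
        = (fun ω i => η i ω) ⁻¹'
            {y : Fin (k+2) → ℝ | x < ∑ i, y i ∧ c < y ⟨0, by omega⟩ ∧ c < y ⟨1, by omega⟩} := rfl
    rw [hpre, ← Measure.map_apply (measurable_pi_lambda _ hm) hS, hjoint,
      CEAux.pi_event_eq k V c x]
  refine ⟨fun c => 2 * (∫ u in Set.Ioi c, Real.exp (α * u) ∂V)
        * (∫ u, Real.exp (α * u) ∂V) ^ k
      + (k : ℝ) * (∫ u, Real.exp (α * u) ∂V) ^ (k - 1)
        * (∫ u in Set.Ioi c, Real.exp (α * u) ∂V) ^ 2, ?_, ?_⟩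
  · intro c
    have hAr : Tendsto (fun t => tailDist (V.restrict (Set.Ioi c)) t / tailDist V t) atTop
        (nhds 1) := by
      refine (tendsto_const_nhds.congr fun t => (div_self (hpos t).ne').symm).congr' ?_
      filter_upwards [eventually_ge_atTop c] with t ht
      rw [CEAux.tailDist_restrict_Ioi, max_eq_left ht]
    have hAint : Integrable (fun u => Real.exp (α * u)) (V.restrict (Set.Ioi c)) :=
      hint.restrict
    have h1 := CEAux.conv2 hpos hlt hBig hβ0 (V.restrict (Set.Ioi c))
      ((Measure.pi (fun _ : Fin k => V)).map (fun y => ∑ i, y i)) 1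
      ((k : ℝ) * (∫ u, Real.exp (α * u) ∂V) ^ (k - 1)) hAr hPk3 hAint hPk1
    rw [hPk2] at h1
    have hm1 := CEAux.mgf_conv α (V.restrict (Set.Ioi c))
      ((Measure.pi (fun _ : Fin k => V)).map (fun y => ∑ i, y i)) hAint hPk1
    have h2 := CEAux.conv2 hpos hlt hBig hβ0 (V.restrict (Set.Ioi c))
      (convDist (V.restrict (Set.Ioi c))
        ((Measure.pi (fun _ : Fin k => V)).map (fun y => ∑ i, y i))) 1
      (1 * (∫ u, Real.exp (α * u) ∂V) ^ k
        + ((k : ℝ) * (∫ u, Real.exp (α * u) ∂V) ^ (k - 1))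
          * ∫ u, Real.exp (α * u) ∂(V.restrict (Set.Ioi c))) hAr h1 hAint hm1.1
    rw [hm1.2, hPk2] at h2
    have hval : 1 * ((∫ u, Real.exp (α * u) ∂(V.restrict (Set.Ioi c)))
          * (∫ u, Real.exp (α * u) ∂V) ^ k)
        + (1 * (∫ u, Real.exp (α * u) ∂V) ^ k
            + ((k : ℝ) * (∫ u, Real.exp (α * u) ∂V) ^ (k - 1))
              * ∫ u, Real.exp (α * u) ∂(V.restrict (Set.Ioi c)))
          * ∫ u, Real.exp (α * u) ∂(V.restrict (Set.Ioi c))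
        = 2 * (∫ u in Set.Ioi c, Real.exp (α * u) ∂V) * (∫ u, Real.exp (α * u) ∂V) ^ k
          + (k : ℝ) * (∫ u, Real.exp (α * u) ∂V) ^ (k - 1)
            * (∫ u in Set.Ioi c, Real.exp (α * u) ∂V) ^ 2 := by
      ring
    rw [hval] at h2
    refine h2.congr fun x => ?_
    have := hev c x
    show tailDist _ x / tailDist V x = _
    rw [tailDist, ← this]
  · have hcont : Continuous (fun t : ℝ =>
        2 * t * (∫ u, Real.exp (α * u) ∂V) ^ k
          + (k : ℝ) * (∫ u, Real.exp (α * u) ∂V) ^ (k - 1) * t ^ 2) := by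
      continuity
    have h := (hcont.tendsto 0).comp hβ0
    simp only [Function.comp_def, mul_zero, zero_mul, ne_eq, OfNat.ofNat_ne_zero,
      not_false_eq_true, zero_pow, add_zero] at h
    exact h
end

section
/- Let U_1, ..., U_n be n ≥ 2 distributions and let α ≥ 0. For p = (p_1,...,p_n) in the open simplex Δ = {p ∈ (0,1)^n : Σ p_i = 1}, write U_p = Σ_{i=1}^n p_i U_i. The following are equivalent: (a) U_p ∈ R*_{-α} for every p ∈ Δ; (b) U_p ∈ R*_{-α} for some p ∈ Δ and, for every y > 0 and every i = 1,...,n, Ū_i(x/y) − y^α Ū_i(x) = o(Σ_{j=1}^n Ū_j(x)) as x → ∞. -/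
open MeasureTheory ProbabilityTheory Filter Asymptotics

noncomputable section Aux
open Set
open scoped ENNReal
set_option linter.unusedSectionVars false
set_option linter.unusedVariables false



lemma tailDist_nonneg (μ : Measure ℝ) (x : ℝ) : 0 ≤ tailDist μ x := ENNReal.toReal_nonneg

lemma tailDist_anti (μ : Measure ℝ) [IsFiniteMeasure μ] : Antitone (tailDist μ) :=
  fun _ _ hab => ENNReal.toReal_mono (measure_ne_top _ _) (measure_mono (Set.Ioi_subset_Ioi hab))

lemma tail_meas (μ : Measure ℝ) : Measurable (fun z => μ (Ioi z)) :=
  Antitone.measurable (fun _ _ hst => measure_mono (Ioi_subset_Ioi hst))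

/-- the event set for convolution tails -/
def Eset (x : ℝ) : Set (ℝ × ℝ) := {p | x < p.1 + p.2}

lemma Eset_meas (x : ℝ) : MeasurableSet (Eset x) :=
  measurableSet_lt measurable_const (measurable_fst.add measurable_snd)

lemma convDist_tail (σ τ : Measure ℝ) [SFinite σ] [SFinite τ] (x : ℝ) :
    convDist σ τ (Ioi x) = (σ.prod τ) (Eset x) := by
  rw [convDist, Measure.map_apply (f := fun p : ℝ × ℝ => p.1 + p.2) (measurable_fst.add measurable_snd) measurableSet_Ioi]
  rfl

def Kset (h x : ℝ) : Set (ℝ × ℝ) := {p | h < p.1 ∧ h < p.2 ∧ x < p.1 + p.2}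

lemma Kset_meas (h x : ℝ) : MeasurableSet (Kset h x) :=
  ((measurableSet_lt measurable_const measurable_fst).inter
    ((measurableSet_lt measurable_const measurable_snd).inter (Eset_meas x)))

def KK (σ τ : Measure ℝ) (x h : ℝ) : ℝ≥0∞ := (σ.prod τ) (Kset h x)

lemma KK_swap (σ τ : Measure ℝ) [SFinite σ] [SFinite τ] (x h : ℝ) :
    KK σ τ x h = KK τ σ x h := by
  have hset : Prod.swap ⁻¹' (Kset h x) = Kset h x := by
    ext p; simp only [Kset, Set.mem_preimage, Set.mem_setOf_eq, Prod.fst_swap, Prod.snd_swap]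
    constructor <;> rintro ⟨h1, h2, h3⟩ <;> exact ⟨h2, h1, by linarith⟩
  rw [KK, KK, ← Measure.prod_swap, Measure.map_apply measurable_swap (Kset_meas h x), hset]

lemma KK_section (σ τ : Measure ℝ) [SFinite σ] [SFinite τ] (x h : ℝ) :
    KK σ τ x h = ∫⁻ u in Ioi h, τ (Ioi (max h (x - u))) ∂σ := by
  rw [KK, Measure.prod_apply (Kset_meas h x)]
  rw [← lintegral_indicator measurableSet_Ioi]
  refine lintegral_congr (fun u => ?_)
  by_cases hu : h < u
  · have : Prod.mk u ⁻¹' Kset h x = Ioi (max h (x - u)) := by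
      ext v; simp only [Kset, Set.mem_preimage, Set.mem_setOf_eq, mem_Ioi, lt_max_iff,
        max_lt_iff, sup_lt_iff]
      constructor
      · rintro ⟨_, h2, h3⟩; exact ⟨h2, by linarith⟩
      · rintro ⟨h1, h2⟩; exact ⟨hu, h1, by linarith⟩
    rw [this, Set.indicator_of_mem (mem_Ioi.mpr hu)]
  · have : Prod.mk u ⁻¹' Kset h x = ∅ := by
      ext v; simp only [Kset, Set.mem_preimage, Set.mem_setOf_eq, Set.mem_empty_iff_false,
        iff_false]
      rintro ⟨h1, _, _⟩; exact hu h1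
    rw [this, measure_empty, Set.indicator_of_notMem (by simpa using hu)]

lemma KK_mono_right (σ τ τ' : Measure ℝ) [SFinite σ] [SFinite τ] [SFinite τ'] (x h : ℝ)
    (c : ℝ≥0∞) (hc : c ≠ ⊤) (hd : ∀ z, τ' (Ioi z) ≤ c * τ (Ioi z)) :
    KK σ τ' x h ≤ c * KK σ τ x h := by
  rw [KK_section, KK_section]
  calc ∫⁻ u in Ioi h, τ' (Ioi (max h (x - u))) ∂σ
      ≤ ∫⁻ u in Ioi h, c * τ (Ioi (max h (x - u))) ∂σ :=
        lintegral_mono (fun u => hd _)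
    _ = c * ∫⁻ u in Ioi h, τ (Ioi (max h (x - u))) ∂σ := lintegral_const_mul' _ _ hc

lemma KK_le (σ τ : Measure ℝ) [IsFiniteMeasure σ] [IsFiniteMeasure τ] (x h : ℝ) :
    KK σ τ x h ≠ ⊤ := by
  exact ((measure_mono (Set.subset_univ _)).trans_lt (measure_lt_top _ _)).ne

/-- the partition identity -/
lemma prod_tail_split (σ τ : Measure ℝ) [IsFiniteMeasure σ] [IsFiniteMeasure τ]
    (h x : ℝ) (hx : 2 * h < x) :
    (σ.prod τ) (Eset x) =
      (∫⁻ u in Iic h, τ (Ioi (x - u)) ∂σ) + (∫⁻ v in Iic h, σ (Ioi (x - v)) ∂τ)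
        + KK σ τ x h := by
  classical
  set E₁ : Set (ℝ × ℝ) := {p | p.1 ≤ h ∧ x < p.1 + p.2} with hE₁def
  set E₂ : Set (ℝ × ℝ) := {p | p.2 ≤ h ∧ h < p.1 ∧ x < p.1 + p.2} with hE₂def
  have mE₁ : MeasurableSet E₁ :=
    (measurableSet_le measurable_fst measurable_const).inter (Eset_meas x)
  have mE₂ : MeasurableSet E₂ :=
    (measurableSet_le measurable_snd measurable_const).inter
      ((measurableSet_lt measurable_const measurable_fst).inter (Eset_meas x))
  have hunion : Eset x = E₁ ∪ (E₂ ∪ Kset h x) := by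
    ext p
    simp only [Eset, Kset, hE₁def, hE₂def, Set.mem_setOf_eq, Set.mem_union]
    constructor
    · intro hp
      rcases le_or_gt p.1 h with h1 | h1
      · exact Or.inl ⟨h1, hp⟩
      · rcases le_or_gt p.2 h with h2 | h2
        · exact Or.inr (Or.inl ⟨h2, h1, hp⟩)
        · exact Or.inr (Or.inr ⟨h1, h2, hp⟩)
    · rintro (⟨_, hp⟩ | ⟨_, _, hp⟩ | ⟨_, _, hp⟩) <;> exact hp
  have hd1 : Disjoint E₁ (E₂ ∪ Kset h x) := by
    rw [Set.disjoint_left]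
    rintro p ⟨hp1, -⟩ (⟨-, hp2, -⟩ | ⟨hp2, -, -⟩) <;> exact absurd hp1 (not_le.mpr hp2)
  have hd2 : Disjoint E₂ (Kset h x) := by
    rw [Set.disjoint_left]
    rintro p ⟨hp1, -, -⟩ ⟨-, hp2, -⟩; exact absurd hp1 (not_le.mpr hp2)
  have e1 : (σ.prod τ) E₁ = ∫⁻ u in Iic h, τ (Ioi (x - u)) ∂σ := by
    rw [Measure.prod_apply mE₁, ← lintegral_indicator measurableSet_Iic]
    refine lintegral_congr (fun u => ?_)
    by_cases hu : u ≤ h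
    · have : Prod.mk u ⁻¹' E₁ = Ioi (x - u) := by
        ext v
        simp only [hE₁def, Set.mem_preimage, Set.mem_setOf_eq, mem_Ioi]
        constructor
        · rintro ⟨-, hv⟩; linarith
        · intro hv; exact ⟨hu, by linarith⟩
      rw [this, Set.indicator_of_mem (mem_Iic.mpr hu)]
    · have : Prod.mk u ⁻¹' E₁ = ∅ := by
        ext v
        simp only [hE₁def, Set.mem_preimage, Set.mem_setOf_eq, Set.mem_empty_iff_false, iff_false]
        rintro ⟨hv, -⟩; exact hu hv
      rw [this, measure_empty, Set.indicator_of_notMem (by simpa using hu)]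
  have e2 : (σ.prod τ) E₂ = ∫⁻ v in Iic h, σ (Ioi (x - v)) ∂τ := by
    have hswap : E₂ = Prod.swap ⁻¹' {q : ℝ × ℝ | q.1 ≤ h ∧ h < q.2 ∧ x < q.2 + q.1} := by
      ext p; simp only [hE₂def, Set.mem_preimage, Set.mem_setOf_eq, Prod.fst_swap, Prod.snd_swap]
    have mE₂' : MeasurableSet {q : ℝ × ℝ | q.1 ≤ h ∧ h < q.2 ∧ x < q.2 + q.1} :=
      (measurableSet_le measurable_fst measurable_const).inter
        ((measurableSet_lt measurable_const measurable_snd).inter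
          (measurableSet_lt measurable_const (measurable_snd.add measurable_fst)))
    rw [hswap, ← Measure.map_apply measurable_swap mE₂', Measure.prod_swap,
      Measure.prod_apply mE₂', ← lintegral_indicator measurableSet_Iic]
    refine lintegral_congr (fun v => ?_)
    by_cases hv : v ≤ h
    · have : Prod.mk v ⁻¹' {q : ℝ × ℝ | q.1 ≤ h ∧ h < q.2 ∧ x < q.2 + q.1} = Ioi (x - v) := by
        ext u
        simp only [Set.mem_preimage, Set.mem_setOf_eq, mem_Ioi]
        constructor
        · rintro ⟨-, -, hu⟩; linarith
        · intro hu; exact ⟨hv, by linarith, by linarith⟩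
      rw [this, Set.indicator_of_mem (mem_Iic.mpr hv)]
    · have : Prod.mk v ⁻¹' {q : ℝ × ℝ | q.1 ≤ h ∧ h < q.2 ∧ x < q.2 + q.1} = ∅ := by
        ext u
        simp only [Set.mem_preimage, Set.mem_setOf_eq, Set.mem_empty_iff_false, iff_false]
        rintro ⟨hu, -⟩; exact hv hu
      rw [this, measure_empty, Set.indicator_of_notMem (by simpa using hv)]
  rw [hunion, measure_union hd1 (mE₂.union (Kset_meas h x)),
    measure_union hd2 (Kset_meas h x), e1, e2, KK, ← add_assoc]


variable {μ : Measure ℝ}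

lemma iInter_Ioi_real : ⋂ h : ℝ, Ioi h = (∅ : Set ℝ) := by
  ext x
  simp only [Set.mem_iInter, mem_Ioi, Set.mem_empty_iff_false, iff_false, not_forall, not_lt]
  exact ⟨x, le_rfl⟩

lemma tendsto_meas_Ioi [IsFiniteMeasure μ] :
    Tendsto (fun h : ℝ => μ (Ioi h)) atTop (nhds 0) := by
  have := tendsto_measure_iInter_atTop (μ := μ) (s := fun h : ℝ => Ioi h)
    (fun h => (measurableSet_Ioi).nullMeasurableSet)
    (fun a b hab => Ioi_subset_Ioi hab) ⟨0, measure_ne_top _ _⟩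
  rwa [iInter_Ioi_real, measure_empty] at this

/-- tail integrals of an integrable nonnegative function vanish -/
lemma trunc_tendsto (f : ℝ → ℝ) [IsFiniteMeasure μ] (hf : Integrable f μ) (hf0 : 0 ≤ f) :
    Tendsto (fun h : ℝ => ∫ u in Iic h, f u ∂μ) atTop (nhds (∫ u, f u ∂μ)) := by
  set ν : Measure ℝ := μ.withDensity (fun u => ENNReal.ofReal (f u))
  have hνfin : IsFiniteMeasure ν := by
    constructor
    rw [withDensity_apply _ MeasurableSet.univ, Measure.restrict_univ]
    exact (hasFiniteIntegral_iff_ofReal (Filter.Eventually.of_forall hf0)).mp hf.2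
  have key : ∀ h : ℝ, ∫ u, f u ∂μ - ∫ u in Iic h, f u ∂μ = (ν (Ioi h)).toReal := by
    intro h
    have hsplit := integral_add_compl (measurableSet_Iic (a := h)) hf (μ := μ)
    rw [compl_Iic] at hsplit
    have : ∫ u in Ioi h, f u ∂μ = (ν (Ioi h)).toReal := by
      rw [integral_eq_lintegral_of_nonneg_ae (Filter.Eventually.of_forall hf0)
        hf.aestronglyMeasurable.restrict, withDensity_apply _ measurableSet_Ioi]
    linarith [this]
  have h2 : Tendsto (fun h : ℝ => (ν (Ioi h)).toReal) atTop (nhds 0) := by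
    have := tendsto_meas_Ioi (μ := ν)
    have h := (ENNReal.tendsto_toReal (by simp)).comp this
    rw [ENNReal.toReal_zero] at h
    exact h
  have h3 : Tendsto (fun h : ℝ => ∫ u, f u ∂μ - (ν (Ioi h)).toReal) atTop
      (nhds (∫ u, f u ∂μ)) := by
    simpa using tendsto_const_nhds.sub h2
  refine h3.congr (fun h => ?_)
  have := key h; linarith

/-- layer cake domination: integrability of `exp (α·)` transfers along tail domination -/
lemma exp_integrable_of_dom (α C : ℝ) (hα : 0 ≤ α) (hC : 0 < C)
    (ρ σ : Measure ℝ) [IsFiniteMeasure ρ] [IsFiniteMeasure σ]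
    (hdom : ∀ z : ℝ, σ (Ioi z) ≤ ENNReal.ofReal C * ρ (Ioi z))
    (hint : Integrable (fun x => Real.exp (α * x)) ρ) :
    Integrable (fun x => Real.exp (α * x)) σ := by
  rcases eq_or_lt_of_le hα with hα0 | hα0
  · simp only [← hα0, zero_mul, Real.exp_zero]
    exact integrable_const 1
  constructor
  · exact (Real.continuous_exp.comp (continuous_const.mul continuous_id)).aestronglyMeasurable
  rw [hasFiniteIntegral_iff_ofReal (Filter.Eventually.of_forall (fun x => (Real.exp_pos _).le))]
  have hset : ∀ (m : Measure ℝ), ∫⁻ x, ENNReal.ofReal (Real.exp (α * x)) ∂m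
      = ∫⁻ t in Ioi (0:ℝ), m {a : ℝ | t < Real.exp (α * a)} := by
    intro m
    exact lintegral_eq_lintegral_meas_lt m (Filter.Eventually.of_forall
      (fun x => (Real.exp_pos _).le))
      (Real.continuous_exp.comp (continuous_const.mul continuous_id)).measurable.aemeasurable
  have hsetIoi : ∀ (m : Measure ℝ), ∀ t : ℝ, 0 < t →
      {a : ℝ | t < Real.exp (α * a)} = Ioi (Real.log t / α) := by
    intro m t ht
    ext a
    simp only [Set.mem_setOf_eq, mem_Ioi, div_lt_iff₀ hα0]
    rw [mul_comm, ← Real.log_lt_iff_lt_exp ht]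
  calc ∫⁻ x, ENNReal.ofReal (Real.exp (α * x)) ∂σ
      = ∫⁻ t in Ioi (0:ℝ), σ {a : ℝ | t < Real.exp (α * a)} := hset σ
    _ ≤ ∫⁻ t in Ioi (0:ℝ), ENNReal.ofReal C * ρ {a : ℝ | t < Real.exp (α * a)} := by
        refine setLIntegral_mono' measurableSet_Ioi (fun t ht => ?_)
        rw [hsetIoi σ t ht]
        exact hdom _

    _ = ENNReal.ofReal C * ∫⁻ t in Ioi (0:ℝ), ρ {a : ℝ | t < Real.exp (α * a)} :=
        lintegral_const_mul' _ _ ENNReal.ofReal_ne_top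
    _ = ENNReal.ofReal C * ∫⁻ x, ENNReal.ofReal (Real.exp (α * x)) ∂ρ := by rw [hset ρ]
    _ < ⊤ := ENNReal.mul_lt_top ENNReal.ofReal_lt_top
        ((hasFiniteIntegral_iff_ofReal (Filter.Eventually.of_forall
          (fun x => (Real.exp_pos _).le))).mp hint.2)


lemma littleO_shift_of_tendsto (ρ : Measure ℝ) (c s : ℝ)
    (hpos : ∀ x, 0 < tailDist ρ x)
    (hH2 : Tendsto (fun x => tailDist ρ (x - s) / tailDist ρ x) atTop (nhds c)) :
    (fun x => tailDist ρ (x - s) - c * tailDist ρ x) =o[atTop] (tailDist ρ) := by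
  rw [isLittleO_iff_tendsto (fun x hx => absurd hx (ne_of_gt (hpos x)))]
  have heq : (fun x => (tailDist ρ (x - s) - c * tailDist ρ x) / tailDist ρ x)
      = fun x => tailDist ρ (x - s) / tailDist ρ x - c := by
    funext x
    rw [sub_div, mul_div_assoc, div_self (ne_of_gt (hpos x)), mul_one]
  rw [heq]
  simpa using hH2.sub_const c

lemma front_asymp (α C : ℝ) (hα : 0 ≤ α) (hC : 0 < C)
    (ρ σ τ : Measure ℝ) [IsFiniteMeasure ρ] [IsFiniteMeasure σ] [IsFiniteMeasure τ]
    (hpos : ∀ x, 0 < tailDist ρ x)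
    (hH2 : ∀ s : ℝ, Tendsto (fun x => tailDist ρ (x - s) / tailDist ρ x) atTop
      (nhds (Real.exp (α * s))))
    (hdom : ∀ x, tailDist τ x ≤ C * tailDist ρ x)
    (hH6 : ∀ s : ℝ, (fun x => tailDist τ (x - s) - Real.exp (α * s) * tailDist τ x)
      =o[atTop] (tailDist ρ))
    (h : ℝ) :
    (fun x => (∫⁻ u in Iic h, τ (Ioi (x - u)) ∂σ).toReal
        - (∫ u in Iic h, Real.exp (α * u) ∂σ) * tailDist τ x) =o[atTop] (tailDist ρ) := by
  have hexpmeas : Measurable (fun u : ℝ => Real.exp (α * u)) :=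
    (Real.continuous_exp.comp (continuous_const.mul continuous_id)).measurable
  have htailmeas : ∀ x : ℝ, Measurable (fun u : ℝ => tailDist τ (x - u)) := fun x =>
    ((tail_meas τ).comp (measurable_const.sub measurable_id)).ennreal_toReal
  have hkey : ∀ x : ℝ, (∫⁻ u in Iic h, τ (Ioi (x - u)) ∂σ).toReal
      = ∫ u in Iic h, tailDist τ (x - u) ∂σ := by
    intro x
    exact (integral_toReal (((tail_meas τ).comp (measurable_const.sub measurable_id)).aemeasurable)
      (Filter.Eventually.of_forall (fun u => measure_lt_top _ _))).symm
  have hIτ : ∀ x : ℝ, Integrable (fun u => tailDist τ (x - u)) (σ.restrict (Iic h)) := by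
    intro x
    refine Integrable.mono' (integrable_const ((τ Set.univ).toReal)) ((htailmeas x).aestronglyMeasurable)
      (Filter.Eventually.of_forall (fun u => ?_))
    rw [Real.norm_of_nonneg (tailDist_nonneg _ _)]
    exact ENNReal.toReal_mono (measure_ne_top _ _) (measure_mono (Set.subset_univ _))
  have hIexp : Integrable (fun u => Real.exp (α * u)) (σ.restrict (Iic h)) := by
    refine Integrable.mono' (integrable_const (Real.exp (α * h))) hexpmeas.aestronglyMeasurable ?_
    filter_upwards [ae_restrict_mem measurableSet_Iic] with u hu
    rw [Real.norm_of_nonneg (Real.exp_pos _).le]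
    exact Real.exp_le_exp.mpr (mul_le_mul_of_nonneg_left hu hα)
  rw [isLittleO_iff_tendsto (fun x hx => absurd hx (ne_of_gt (hpos x)))]
  have hratio : ∀ x : ℝ,
      ((∫⁻ u in Iic h, τ (Ioi (x - u)) ∂σ).toReal
        - (∫ u in Iic h, Real.exp (α * u) ∂σ) * tailDist τ x) / tailDist ρ x
      = ∫ u in Iic h, (tailDist τ (x - u) - Real.exp (α * u) * tailDist τ x) / tailDist ρ x ∂σ := by
    intro x
    rw [integral_div, integral_sub (hIτ x) (hIexp.mul_const _), hkey x, integral_mul_const]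
  have hmain : Tendsto (fun x => ∫ u in Iic h,
      (tailDist τ (x - u) - Real.exp (α * u) * tailDist τ x) / tailDist ρ x ∂σ) atTop
      (nhds 0) := by
    have h0 : (0 : ℝ) = ∫ u in Iic h, (0 : ℝ) ∂σ := by simp
    rw [h0]
    refine tendsto_integral_filter_of_dominated_convergence
      (fun _ => 3 * C * Real.exp (α * h)) ?_ ?_ (integrable_const _) ?_
    · exact Filter.Eventually.of_forall (fun x =>
        (((htailmeas x).sub (hexpmeas.mul_const _)).div_const _).aestronglyMeasurable)
    · have hev : ∀ᶠ x in atTop,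
          tailDist ρ (x - h) / tailDist ρ x ≤ 2 * Real.exp (α * h) :=
        (hH2 h).eventually_le_const (by nlinarith [Real.exp_pos (α * h)])
      filter_upwards [hev] with x hx
      filter_upwards [ae_restrict_mem measurableSet_Iic] with u hu
      replace hu : u ≤ h := hu
      have hx' : tailDist ρ (x - h) ≤ 2 * Real.exp (α * h) * tailDist ρ x := by
        rw [div_le_iff₀ (hpos x)] at hx; linarith
      have h1 : tailDist τ (x - u) ≤ 2 * C * Real.exp (α * h) * tailDist ρ x := by
        calc tailDist τ (x - u) ≤ tailDist τ (x - h) := tailDist_anti τ (by linarith)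
          _ ≤ C * tailDist ρ (x - h) := hdom _
          _ ≤ C * (2 * Real.exp (α * h) * tailDist ρ x) :=
              mul_le_mul_of_nonneg_left hx' hC.le
          _ = 2 * C * Real.exp (α * h) * tailDist ρ x := by ring
      have h2 : Real.exp (α * u) * tailDist τ x ≤ C * Real.exp (α * h) * tailDist ρ x := by
        have e1 : Real.exp (α * u) ≤ Real.exp (α * h) :=
          Real.exp_le_exp.mpr (mul_le_mul_of_nonneg_left hu hα)
        calc Real.exp (α * u) * tailDist τ x ≤ Real.exp (α * h) * tailDist τ x :=
              mul_le_mul_of_nonneg_right e1 (tailDist_nonneg _ _)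
          _ ≤ Real.exp (α * h) * (C * tailDist ρ x) :=
              mul_le_mul_of_nonneg_left (hdom x) (Real.exp_pos _).le
          _ = C * Real.exp (α * h) * tailDist ρ x := by ring
      rw [norm_div, Real.norm_of_nonneg (hpos x).le, div_le_iff₀ (hpos x)]
      rw [Real.norm_eq_abs, abs_sub_le_iff]
      constructor
      · have := tailDist_nonneg τ x
        have := (Real.exp_pos (α*u)).le
        nlinarith [tailDist_nonneg τ (x - u), mul_nonneg (Real.exp_pos (α*u)).le (tailDist_nonneg τ x)]
      · have := tailDist_nonneg τ (x - u)
        nlinarith [tailDist_nonneg τ (x-u), h2, h1, hpos x]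
    · refine Filter.Eventually.of_forall (fun u => ?_)
      exact (hH6 u).tendsto_div_nhds_zero
  exact hmain.congr' (Filter.Eventually.of_forall (fun x => (hratio x).symm))

-- new material
lemma front_fin (σ τ : Measure ℝ) [IsFiniteMeasure σ] [IsFiniteMeasure τ] (h x : ℝ) :
    (∫⁻ u in Iic h, τ (Ioi (x - u)) ∂σ) ≠ ⊤ := by
  refine ne_of_lt (lt_of_le_of_lt (lintegral_mono (fun u => measure_mono (Set.subset_univ _))) ?_)
  rw [lintegral_const]
  exact ENNReal.mul_lt_top (measure_lt_top _ _) (measure_lt_top _ _)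

lemma KK_fin (σ τ : Measure ℝ) [IsFiniteMeasure σ] [IsFiniteMeasure τ] (x h : ℝ) :
    KK σ τ x h ≠ ⊤ :=
  ((measure_mono (Set.subset_univ _)).trans_lt (measure_lt_top _ _)).ne

lemma split_toReal (σ τ : Measure ℝ) [IsFiniteMeasure σ] [IsFiniteMeasure τ]
    (h x : ℝ) (hx : 2 * h < x) :
    tailDist (convDist σ τ) x = (∫⁻ u in Iic h, τ (Ioi (x - u)) ∂σ).toReal
      + (∫⁻ v in Iic h, σ (Ioi (x - v)) ∂τ).toReal + (KK σ τ x h).toReal := by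
  rw [tailDist, convDist_tail, prod_tail_split σ τ h x hx,
    ENNReal.toReal_add (ENNReal.add_ne_top.mpr ⟨front_fin σ τ h x, front_fin τ σ h x⟩)
      (KK_fin σ τ x h),
    ENNReal.toReal_add (front_fin σ τ h x) (front_fin τ σ h x)]

lemma Krr_small (α : ℝ) (hα : 0 ≤ α) (ρ : Measure ℝ) [IsFiniteMeasure ρ]
    (hpos : ∀ x, 0 < tailDist ρ x)
    (hH2 : ∀ s : ℝ, Tendsto (fun x => tailDist ρ (x - s) / tailDist ρ x) atTop
      (nhds (Real.exp (α * s))))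
    (hint : Integrable (fun x => Real.exp (α * x)) ρ)
    (hH4 : Tendsto (fun x => tailDist (convDist ρ ρ) x / tailDist ρ x) atTop
      (nhds (2 * ∫ u, Real.exp (α * u) ∂ρ)))
    {ε : ℝ} (hε : 0 < ε) :
    ∃ h₀ : ℝ, ∀ h, h₀ ≤ h → ∀ᶠ x in atTop, (KK ρ ρ x h).toReal ≤ ε * tailDist ρ x := by
  have htr := trunc_tendsto (μ := ρ) (fun u => Real.exp (α * u)) hint
    (fun u => (Real.exp_pos _).le)
  have hev : ∀ᶠ h : ℝ in atTop,
      2 * ∫ u, Real.exp (α * u) ∂ρ - 2 * ∫ u in Iic h, Real.exp (α * u) ∂ρ ≤ ε / 2 := by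
    have h2 := (htr.const_mul 2).eventually_const_le
      (u := 2 * (∫ u, Real.exp (α * u) ∂ρ) - ε / 2) (by linarith)
    filter_upwards [h2] with h hh
    linarith
  obtain ⟨h₀, hh₀⟩ := eventually_atTop.mp hev
  refine ⟨h₀, fun h hh => ?_⟩
  -- ratio of KK tends to 2m - 2I h ≤ ε/2
  have hfront := front_asymp α 1 hα one_pos ρ ρ ρ hpos hH2
    (fun x => by rw [one_mul]) (fun s => littleO_shift_of_tendsto ρ _ s hpos (hH2 s)) h
  have hA : Tendsto (fun x => (∫⁻ u in Iic h, ρ (Ioi (x - u)) ∂ρ).toReal / tailDist ρ x)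
      atTop (nhds (∫ u in Iic h, Real.exp (α * u) ∂ρ)) := by
    have h1 := hfront.tendsto_div_nhds_zero
    have h2 : ∀ x : ℝ, ((∫⁻ u in Iic h, ρ (Ioi (x - u)) ∂ρ).toReal
        - (∫ u in Iic h, Real.exp (α * u) ∂ρ) * tailDist ρ x) / tailDist ρ x
        = (∫⁻ u in Iic h, ρ (Ioi (x - u)) ∂ρ).toReal / tailDist ρ x
          - (∫ u in Iic h, Real.exp (α * u) ∂ρ) := by
      intro x
      rw [sub_div, mul_div_assoc, div_self (ne_of_gt (hpos x)), mul_one]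
    rw [tendsto_congr h2] at h1
    have := h1.add_const (∫ u in Iic h, Real.exp (α * u) ∂ρ)
    simpa using this
  have hKr : Tendsto (fun x => (KK ρ ρ x h).toReal / tailDist ρ x) atTop
      (nhds (2 * ∫ u, Real.exp (α * u) ∂ρ - 2 * ∫ u in Iic h, Real.exp (α * u) ∂ρ)) := by
    have hcongr : (fun x => tailDist (convDist ρ ρ) x / tailDist ρ x
          - 2 * ((∫⁻ u in Iic h, ρ (Ioi (x - u)) ∂ρ).toReal / tailDist ρ x))
        =ᶠ[atTop] (fun x => (KK ρ ρ x h).toReal / tailDist ρ x) := by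
      filter_upwards [eventually_gt_atTop (2 * h)] with x hx
      rw [split_toReal ρ ρ h x hx]
      field_simp
      ring
    exact (hH4.sub (hA.const_mul 2)).congr' hcongr
  have hle := hKr.eventually_le_const (show (2 * ∫ u, Real.exp (α * u) ∂ρ
      - 2 * ∫ u in Iic h, Real.exp (α * u) ∂ρ) < ε from lt_of_le_of_lt (hh₀ h hh) (by linarith))
  filter_upwards [hle] with x hx
  rw [div_le_iff₀ (hpos x)] at hx
  linarith [hx]

lemma dom_ennreal {C : ℝ} (hC : 0 < C) (ρ σ : Measure ℝ) [IsFiniteMeasure ρ] [IsFiniteMeasure σ]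
    (hdom : ∀ x, tailDist σ x ≤ C * tailDist ρ x) :
    ∀ z : ℝ, σ (Ioi z) ≤ ENNReal.ofReal C * ρ (Ioi z) := by
  intro z
  have h1 : (σ (Ioi z)).toReal ≤ (ENNReal.ofReal C * ρ (Ioi z)).toReal := by
    rw [ENNReal.toReal_mul, ENNReal.toReal_ofReal hC.le]
    exact hdom z
  exact (ENNReal.toReal_le_toReal (measure_ne_top _ _)
    (ENNReal.mul_ne_top ENNReal.ofReal_ne_top (measure_ne_top _ _))).mp h1

lemma main_conv (α C : ℝ) (hα : 0 ≤ α) (hC : 0 < C)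
    (ρ σ τ : Measure ℝ) [IsFiniteMeasure ρ] [IsFiniteMeasure σ] [IsFiniteMeasure τ]
    (hpos : ∀ x, 0 < tailDist ρ x)
    (hH2 : ∀ s : ℝ, Tendsto (fun x => tailDist ρ (x - s) / tailDist ρ x) atTop
      (nhds (Real.exp (α * s))))
    (hint : Integrable (fun x => Real.exp (α * x)) ρ)
    (hH4 : Tendsto (fun x => tailDist (convDist ρ ρ) x / tailDist ρ x) atTop
      (nhds (2 * ∫ u, Real.exp (α * u) ∂ρ)))
    (hdomσ : ∀ x, tailDist σ x ≤ C * tailDist ρ x)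
    (hdomτ : ∀ x, tailDist τ x ≤ C * tailDist ρ x)
    (hH6σ : ∀ s : ℝ, (fun x => tailDist σ (x - s) - Real.exp (α * s) * tailDist σ x)
      =o[atTop] (tailDist ρ))
    (hH6τ : ∀ s : ℝ, (fun x => tailDist τ (x - s) - Real.exp (α * s) * tailDist τ x)
      =o[atTop] (tailDist ρ)) :
    Integrable (fun x => Real.exp (α * x)) σ ∧ Integrable (fun x => Real.exp (α * x)) τ ∧
    (fun x => tailDist (convDist σ τ) x - (∫ u, Real.exp (α * u) ∂σ) * tailDist τ x
      - (∫ u, Real.exp (α * u) ∂τ) * tailDist σ x) =o[atTop] (tailDist ρ) := by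
  have hIσ := exp_integrable_of_dom α C hα hC ρ σ (dom_ennreal hC ρ σ hdomσ) hint
  have hIτ := exp_integrable_of_dom α C hα hC ρ τ (dom_ennreal hC ρ τ hdomτ) hint
  refine ⟨hIσ, hIτ, ?_⟩
  rw [isLittleO_iff]
  intro ε hε
  set mσ := ∫ u, Real.exp (α * u) ∂σ with hmσ
  set mτ := ∫ u, Real.exp (α * u) ∂τ with hmτ
  have hC2 : (0:ℝ) < C * C := mul_pos hC hC
  have hε5 : (0:ℝ) < ε / 5 := by linarith
  obtain ⟨h₀, hP⟩ := Krr_small α hα ρ hpos hH2 hint hH4 (ε := (ε/5) / (C*C)) (div_pos hε5 hC2)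
  have htrσ : ∀ᶠ k : ℝ in atTop, mσ - (ε/5)/(C+1) ≤ ∫ u in Iic k, Real.exp (α * u) ∂σ :=
    (trunc_tendsto (μ := σ) _ hIσ (fun u => (Real.exp_pos _).le)).eventually_const_le
      (by have : (0:ℝ) < (ε/5)/(C+1) := div_pos hε5 (by linarith); linarith)
  have htrτ : ∀ᶠ k : ℝ in atTop, mτ - (ε/5)/(C+1) ≤ ∫ u in Iic k, Real.exp (α * u) ∂τ :=
    (trunc_tendsto (μ := τ) _ hIτ (fun u => (Real.exp_pos _).le)).eventually_const_le
      (by have : (0:ℝ) < (ε/5)/(C+1) := div_pos hε5 (by linarith); linarith)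
  obtain ⟨h₁, hh₁⟩ := eventually_atTop.mp htrσ
  obtain ⟨h₂, hh₂⟩ := eventually_atTop.mp htrτ
  set h := max h₀ (max h₁ h₂) with hhdef
  set Iσ := ∫ u in Iic h, Real.exp (α * u) ∂σ with hIσdef
  set Iτ := ∫ u in Iic h, Real.exp (α * u) ∂τ with hIτdef
  have hIσle : mσ - (ε/5)/(C+1) ≤ Iσ := hh₁ h ((le_max_left _ _).trans (le_max_right _ _))
  have hIτle : mτ - (ε/5)/(C+1) ≤ Iτ := hh₂ h ((le_max_right _ _).trans (le_max_right _ _))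
  have hIσle' : Iσ ≤ mσ := setIntegral_le_integral hIσ
    (Filter.Eventually.of_forall (fun u => (Real.exp_pos _).le))
  have hIτle' : Iτ ≤ mτ := setIntegral_le_integral hIτ
    (Filter.Eventually.of_forall (fun u => (Real.exp_pos _).le))
  have F1 := front_asymp α C hα hC ρ σ τ hpos hH2 hdomτ hH6τ h
  have F2 := front_asymp α C hα hC ρ τ σ hpos hH2 hdomσ hH6σ h
  have hKb : ∀ x : ℝ, (KK σ τ x h).toReal ≤ C * C * (KK ρ ρ x h).toReal := by
    intro x
    have k1 : KK σ τ x h ≤ ENNReal.ofReal C * KK σ ρ x h :=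
      KK_mono_right σ ρ τ x h _ ENNReal.ofReal_ne_top (dom_ennreal hC ρ τ hdomτ)
    have k2 : KK σ ρ x h = KK ρ σ x h := KK_swap σ ρ x h
    have k3 : KK ρ σ x h ≤ ENNReal.ofReal C * KK ρ ρ x h :=
      KK_mono_right ρ ρ σ x h _ ENNReal.ofReal_ne_top (dom_ennreal hC ρ σ hdomσ)
    have k4 : KK σ τ x h ≤ ENNReal.ofReal C * (ENNReal.ofReal C * KK ρ ρ x h) := by
      refine k1.trans ?_
      rw [k2]
      exact mul_le_mul_right k3 _
    have k5 := ENNReal.toReal_mono (by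
      exact ENNReal.mul_ne_top ENNReal.ofReal_ne_top
        (ENNReal.mul_ne_top ENNReal.ofReal_ne_top (KK_fin ρ ρ x h))) k4
    rwa [ENNReal.toReal_mul, ENNReal.toReal_mul, ENNReal.toReal_ofReal hC.le, ← mul_assoc]
      at k5
  filter_upwards [isLittleO_iff.mp F1 hε5, isLittleO_iff.mp F2 hε5,
    hP h (le_max_left _ _), eventually_gt_atTop (2 * h)] with x e1 e2 eK hx
  rw [Real.norm_of_nonneg (hpos x).le] at e1 e2 ⊢
  rw [split_toReal σ τ h x hx]
  set A1 := (∫⁻ u in Iic h, τ (Ioi (x - u)) ∂σ).toReal with hA1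
  set A2 := (∫⁻ v in Iic h, σ (Ioi (x - v)) ∂τ).toReal with hA2
  rw [Real.norm_eq_abs] at e1 e2
  have b1 := abs_le.mp e1
  have b2 := abs_le.mp e2
  have bK0 : (0:ℝ) ≤ (KK σ τ x h).toReal := ENNReal.toReal_nonneg
  have bK : (KK σ τ x h).toReal ≤ (ε/5) * tailDist ρ x := by
    refine (hKb x).trans ?_
    calc C * C * (KK ρ ρ x h).toReal ≤ C * C * ((ε/5)/(C*C) * tailDist ρ x) := by
          exact mul_le_mul_of_nonneg_left eK hC2.le
      _ = (ε/5) * tailDist ρ x := by field_simp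
  have bσ0 : (0:ℝ) ≤ (mσ - Iσ) * tailDist τ x :=
    mul_nonneg (by linarith) (tailDist_nonneg _ _)
  have hcc : ∀ t : ℝ, 0 ≤ t → ((ε/5)/(C+1)) * (C * t) ≤ (ε/5) * t := by
    intro t ht
    have h1 : ((ε/5)/(C+1)) * C ≤ ε/5 := by
      rw [div_mul_eq_mul_div, div_le_iff₀ (by linarith : (0:ℝ) < C + 1)]
      nlinarith
    calc ((ε/5)/(C+1)) * (C * t) = (((ε/5)/(C+1)) * C) * t := by ring
      _ ≤ (ε/5) * t := mul_le_mul_of_nonneg_right h1 ht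
  have bσ : (mσ - Iσ) * tailDist τ x ≤ (ε/5) * tailDist ρ x := by
    calc (mσ - Iσ) * tailDist τ x ≤ ((ε/5)/(C+1)) * (C * tailDist ρ x) := by
          refine mul_le_mul (by linarith) (hdomτ x) (tailDist_nonneg _ _) ?_
          positivity
      _ ≤ (ε/5) * tailDist ρ x := hcc _ (tailDist_nonneg _ _)
  have bτ0 : (0:ℝ) ≤ (mτ - Iτ) * tailDist σ x :=
    mul_nonneg (by linarith) (tailDist_nonneg _ _)
  have bτ : (mτ - Iτ) * tailDist σ x ≤ (ε/5) * tailDist ρ x := by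
    calc (mτ - Iτ) * tailDist σ x ≤ ((ε/5)/(C+1)) * (C * tailDist ρ x) := by
          refine mul_le_mul (by linarith) (hdomσ x) (tailDist_nonneg _ _) ?_
          positivity
      _ ≤ (ε/5) * tailDist ρ x := hcc _ (tailDist_nonneg _ _)
  have hid : A1 + A2 + (KK σ τ x h).toReal - mσ * tailDist τ x - mτ * tailDist σ x
      = (A1 - Iσ * tailDist τ x) + (A2 - Iτ * tailDist σ x) + (KK σ τ x h).toReal
        - (mσ - Iσ) * tailDist τ x - (mτ - Iτ) * tailDist σ x := by ring
  rw [Real.norm_eq_abs, hid, abs_le]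
  constructor <;> linarith [b1.1, b1.2, b2.1, b2.2, bK, bK0, bσ, bσ0, bτ, bτ0]

/-- the normalized log-scale distribution -/
def nuOf (W : Measure ℝ) : Measure ℝ :=
  posMod (((W (Set.Ioi 0))⁻¹ • W.restrict (Set.Ioi 0)).map Real.log)

lemma max_meas : Measurable (fun x : ℝ => max x 0) := measurable_id.max measurable_const

lemma nuOf_apply (W : Measure ℝ) (s : Set ℝ) (hs : MeasurableSet s) :
    nuOf W s = (W (Set.Ioi 0))⁻¹ * W ((fun t => max (Real.log t) 0) ⁻¹' s ∩ Set.Ioi 0) := by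
  rw [nuOf, posMod, Measure.map_map max_meas Real.measurable_log,
    Measure.map_apply (max_meas.comp Real.measurable_log) hs, Measure.smul_apply,
    Measure.restrict_apply ((max_meas.comp Real.measurable_log) hs), smul_eq_mul]
  rfl

lemma nuOf_tail (W : Measure ℝ) (x : ℝ) (hx : 0 ≤ x) :
    nuOf W (Set.Ioi x) = (W (Set.Ioi 0))⁻¹ * W (Set.Ioi (Real.exp x)) := by
  rw [nuOf_apply W _ measurableSet_Ioi]
  have hset : (fun t => max (Real.log t) 0) ⁻¹' (Set.Ioi x) ∩ Set.Ioi 0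
      = Set.Ioi (Real.exp x) := by
    ext t
    simp only [Set.mem_inter_iff, Set.mem_preimage, Set.mem_Ioi]
    constructor
    · rintro ⟨h1, h2⟩
      rcases lt_max_iff.mp h1 with h3 | h3
      · exact (Real.lt_log_iff_exp_lt h2).mp h3
      · linarith
    · intro ht
      have h0 : (0:ℝ) < t := lt_trans (Real.exp_pos _) ht
      exact ⟨lt_max_iff.mpr (Or.inl ((Real.lt_log_iff_exp_lt h0).mpr ht)), h0⟩
  rw [hset]

lemma nuOf_prob (W : Measure ℝ) [IsFiniteMeasure W] (hc : W (Set.Ioi 0) ≠ 0) :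
    IsProbabilityMeasure (nuOf W) := by
  constructor
  rw [nuOf_apply W _ MeasurableSet.univ]
  simp only [Set.preimage_univ, Set.univ_inter]
  exact ENNReal.inv_mul_cancel hc (measure_ne_top _ _)

/-- real tail formula -/
lemma nuOf_tailDist (W : Measure ℝ) [IsFiniteMeasure W] (x : ℝ) (hx : 0 ≤ x) :
    tailDist (nuOf W) x = ((W (Set.Ioi 0)).toReal)⁻¹ * tailDist W (Real.exp x) := by
  rw [tailDist, nuOf_tail W x hx, ENNReal.toReal_mul, ENNReal.toReal_inv]
  rfl

lemma tailDist_pos_iff (W : Measure ℝ) [IsFiniteMeasure W] (x : ℝ) :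
    0 < tailDist W x ↔ W (Set.Ioi x) ≠ 0 := by
  rw [tailDist, ENNReal.toReal_pos_iff]
  constructor
  · rintro ⟨h1, _⟩; exact h1.ne'
  · intro h; exact ⟨h.bot_lt, measure_lt_top _ _⟩

/-- positivity of U-level tails from positivity of ν-level tails -/
lemma U_tail_pos (W : Measure ℝ) [IsFiniteMeasure W]
    (hpos : ∀ x, 0 < tailDist (nuOf W) x) (hc : W (Set.Ioi 0) ≠ 0) (t : ℝ) :
    0 < tailDist W t := by
  have h1 : (0:ℝ) ≤ Real.log (max t 1) := Real.log_nonneg (le_max_right _ _)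
  have h2 := hpos (Real.log (max t 1))
  rw [nuOf_tailDist W _ h1, Real.exp_log (lt_of_lt_of_le one_pos (le_max_right t 1))] at h2
  have h3 : 0 < tailDist W (max t 1) := by
    by_contra hcon
    push_neg at hcon
    have := tailDist_nonneg W (max t 1)
    have h4 : tailDist W (max t 1) = 0 := le_antisymm hcon this
    rw [h4, mul_zero] at h2
    exact lt_irrefl _ h2
  exact lt_of_lt_of_le h3 (tailDist_anti W (le_max_left t 1))

/-- exp-scale conversion of littleO relations: U-level to ν-level -/
lemma exp_scale_littleO (W W' : Measure ℝ) [IsFiniteMeasure W] [IsFiniteMeasure W']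
    (hcW : W (Set.Ioi 0) ≠ 0) (hcW' : W' (Set.Ioi 0) ≠ 0) (α s : ℝ)
    (h : (fun t => tailDist W' (t / Real.exp s) - (Real.exp s) ^ α * tailDist W' t)
      =o[atTop] (tailDist W)) :
    (fun x => tailDist (nuOf W') (x - s) - Real.exp (α * s) * tailDist (nuOf W') x)
      =o[atTop] (tailDist (nuOf W)) := by
  have hcW'' : 0 < (W (Set.Ioi 0)).toReal := by
    rw [ENNReal.toReal_pos_iff]; exact ⟨hcW.bot_lt, measure_lt_top _ _⟩
  have hcW''' : 0 < (W' (Set.Ioi 0)).toReal := by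
    rw [ENNReal.toReal_pos_iff]; exact ⟨hcW'.bot_lt, measure_lt_top _ _⟩
  have hrpow : (Real.exp s) ^ α = Real.exp (α * s) := by
    rw [Real.rpow_def_of_pos (Real.exp_pos s), Real.log_exp, mul_comm]
  have h2 := h.comp_tendsto Real.tendsto_exp_atTop
  have hev1 : (fun x => (tailDist W' (Real.exp x / Real.exp s)
        - (Real.exp s) ^ α * tailDist W' (Real.exp x)))
      =ᶠ[atTop] (fun x => (W' (Set.Ioi 0)).toReal *
        (tailDist (nuOf W') (x - s) - Real.exp (α * s) * tailDist (nuOf W') x)) := by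
    filter_upwards [eventually_ge_atTop (max 0 s + |s|)] with x hx
    have hx1 : (0:ℝ) ≤ x - s := by
      have := le_max_right (0:ℝ) s; have := abs_nonneg s; have h3 := le_abs_self s; linarith
    have hx0 : (0:ℝ) ≤ x := by
      have := le_max_left (0:ℝ) s; have := abs_nonneg s; have h3 := neg_abs_le s; linarith
    rw [nuOf_tailDist W' _ hx1, nuOf_tailDist W' _ hx0, ← Real.exp_sub, hrpow]
    field_simp
  have hev2 : (fun x => tailDist W (Real.exp x))
      =ᶠ[atTop] (fun x => (W (Set.Ioi 0)).toReal * tailDist (nuOf W) x) := by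
    filter_upwards [eventually_ge_atTop (0:ℝ)] with x hx
    rw [nuOf_tailDist W _ hx]
    field_simp
  have h3 := (h2.congr' hev1 hev2)
  rw [isLittleO_const_mul_left_iff (ne_of_gt hcW'''),
    isLittleO_const_mul_right_iff (ne_of_gt hcW'')] at h3
  exact h3

/-- log-scale conversion of littleO relations: ν-level to U-level -/
lemma log_scale_littleO (W W' : Measure ℝ) [IsFiniteMeasure W] [IsFiniteMeasure W']
    (hcW : W (Set.Ioi 0) ≠ 0) (hcW' : W' (Set.Ioi 0) ≠ 0) (α s : ℝ)
    (h : (fun x => tailDist (nuOf W') (x - s) - Real.exp (α * s) * tailDist (nuOf W') x)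
      =o[atTop] (tailDist (nuOf W))) :
    (fun t => tailDist W' (t / Real.exp s) - (Real.exp s) ^ α * tailDist W' t)
      =o[atTop] (tailDist W) := by
  have hcW'' : 0 < (W (Set.Ioi 0)).toReal := by
    rw [ENNReal.toReal_pos_iff]; exact ⟨hcW.bot_lt, measure_lt_top _ _⟩
  have hcW''' : 0 < (W' (Set.Ioi 0)).toReal := by
    rw [ENNReal.toReal_pos_iff]; exact ⟨hcW'.bot_lt, measure_lt_top _ _⟩
  have hrpow : (Real.exp s) ^ α = Real.exp (α * s) := by
    rw [Real.rpow_def_of_pos (Real.exp_pos s), Real.log_exp, mul_comm]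
  have h2 := h.comp_tendsto Real.tendsto_log_atTop
  have hev1 : (fun t => (tailDist (nuOf W') (Real.log t - s)
        - Real.exp (α * s) * tailDist (nuOf W') (Real.log t)))
      =ᶠ[atTop] (fun t => ((W' (Set.Ioi 0)).toReal)⁻¹ *
        (tailDist W' (t / Real.exp s) - (Real.exp s) ^ α * tailDist W' t)) := by
    filter_upwards [eventually_ge_atTop (max 1 (Real.exp s))] with t ht
    have ht1 : (1:ℝ) ≤ t := le_trans (le_max_left _ _) ht
    have ht0 : (0:ℝ) < t := lt_of_lt_of_le one_pos ht1
    have hlog0 : (0:ℝ) ≤ Real.log t := Real.log_nonneg ht1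
    have hlogs : (0:ℝ) ≤ Real.log t - s := by
      have h5 : Real.exp s ≤ t := le_trans (le_max_right _ _) ht
      have h6 : s ≤ Real.log t := by
        rw [← Real.log_exp s]
        exact Real.log_le_log (Real.exp_pos s) h5
      linarith
    rw [nuOf_tailDist W' _ hlogs, nuOf_tailDist W' _ hlog0, Real.exp_sub, Real.exp_log ht0,
      hrpow]
    ring
  have hev2 : (fun t => tailDist (nuOf W) (Real.log t))
      =ᶠ[atTop] (fun t => ((W (Set.Ioi 0)).toReal)⁻¹ * tailDist W t) := by
    filter_upwards [eventually_ge_atTop (1:ℝ)] with t ht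
    have ht0 : (0:ℝ) < t := lt_of_lt_of_le one_pos ht
    rw [nuOf_tailDist W _ (Real.log_nonneg ht), Real.exp_log ht0]
  have h3 := (h2.congr' hev1 hev2)
  rw [isLittleO_const_mul_left_iff (inv_ne_zero (ne_of_gt hcW''')),
    isLittleO_const_mul_right_iff (inv_ne_zero (ne_of_gt hcW''))] at h3
  exact h3


section Mix
variable {n : ℕ} (U : Fin n → Measure ℝ) [∀ i, IsProbabilityMeasure (U i)]

lemma mix_apply (q : Fin n → ℝ) (s : Set ℝ) :
    (∑ i, ENNReal.ofReal (q i) • U i) s = ∑ i, ENNReal.ofReal (q i) * U i s := by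
  rw [Measure.coe_finset_sum, Finset.sum_apply]
  rfl

lemma tail_mix (q : Fin n → ℝ) (hq : ∀ i, 0 ≤ q i) (x : ℝ) :
    tailDist (∑ i, ENNReal.ofReal (q i) • U i) x = ∑ i, q i * tailDist (U i) x := by
  rw [tailDist, mix_apply]
  rw [ENNReal.toReal_sum (fun i _ => ENNReal.mul_ne_top ENNReal.ofReal_ne_top
    (measure_ne_top _ _))]
  refine Finset.sum_congr rfl (fun i _ => ?_)
  rw [ENNReal.toReal_mul, ENNReal.toReal_ofReal (hq i)]
  rfl

lemma mix_prob (q : Fin n → ℝ) (hq : ∀ i, 0 ≤ q i) (hqs : ∑ i, q i = 1) :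
    IsProbabilityMeasure (∑ i, ENNReal.ofReal (q i) • U i) := by
  constructor
  rw [mix_apply]
  simp only [measure_univ, mul_one]
  rw [← ENNReal.ofReal_sum_of_nonneg (fun i _ => hq i), hqs, ENNReal.ofReal_one]

/-- lower bound on the mixture tail by the sum of tails -/
lemma mix_tail_lower (q : Fin n → ℝ) (m : ℝ) (hm : ∀ i, m ≤ q i) (hm0 : 0 ≤ m)
    (hq : ∀ i, 0 ≤ q i) (x : ℝ) :
    m * (∑ j, tailDist (U j) x) ≤ tailDist (∑ i, ENNReal.ofReal (q i) • U i) x := by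
  rw [tail_mix U q hq x, Finset.mul_sum]
  exact Finset.sum_le_sum (fun i _ =>
    mul_le_mul_of_nonneg_right (hm i) (tailDist_nonneg _ _))

lemma mix_tail_upper (q : Fin n → ℝ) (hq : ∀ i, 0 ≤ q i) (hq1 : ∀ i, q i ≤ 1) (x : ℝ) :
    tailDist (∑ i, ENNReal.ofReal (q i) • U i) x ≤ ∑ j, tailDist (U j) x := by
  rw [tail_mix U q hq x]
  refine Finset.sum_le_sum (fun i _ => ?_)
  nth_rewrite 2 [← one_mul (tailDist (U i) x)]
  exact mul_le_mul_of_nonneg_right (hq1 i) (tailDist_nonneg _ _)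

/-- comparability of two mixture tails -/
lemma mix_tail_compare (p q : Fin n → ℝ) (m : ℝ) (hm : ∀ i, m ≤ q i) (hm0 : 0 < m)
    (hq : ∀ i, 0 ≤ q i) (hp : ∀ i, 0 ≤ p i) (hp1 : ∀ i, p i ≤ 1) (x : ℝ) :
    tailDist (∑ i, ENNReal.ofReal (p i) • U i) x
      ≤ m⁻¹ * tailDist (∑ i, ENNReal.ofReal (q i) • U i) x := by
  have h1 := mix_tail_upper U p hp hp1 x
  have h2 := mix_tail_lower U q m hm hm0.le hq x
  rw [le_inv_mul_iff₀ hm0]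
  nlinarith [mul_le_mul_of_nonneg_left h1 hm0.le]

end Mix

lemma tailDist_le_one (μ : Measure ℝ) [IsProbabilityMeasure μ] (x : ℝ) :
    tailDist μ x ≤ 1 := by
  rw [tailDist, ← ENNReal.toReal_one]
  exact ENNReal.toReal_mono ENNReal.one_ne_top prob_le_one

lemma pos_of_dom {a b C : ℝ} (hC : 0 < C) (h : a ≤ C * b) (ha : 0 < a) (hb0 : 0 ≤ b) :
    0 < b := by nlinarith

lemma toReal_pos_of_ne_zero (μ : Measure ℝ) [IsFiniteMeasure μ] {s : Set ℝ} (h : μ s ≠ 0) :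
    0 < (μ s).toReal :=
  ENNReal.toReal_pos h (measure_ne_top _ _)

/-- domination of normalized log-scale tails from domination of the raw tails -/
lemma nu_dom_general (V W : Measure ℝ) [IsProbabilityMeasure V] [IsProbabilityMeasure W]
    (hcV : V (Set.Ioi 0) ≠ 0) (hcW : W (Set.Ioi 0) ≠ 0)
    (c : ℝ) (hc : 0 < c) (hU : ∀ t, tailDist V t ≤ c * tailDist W t)
    (hW0 : 0 < tailDist (nuOf W) 0) :
    ∃ C : ℝ, 0 < C ∧ ∀ x, tailDist (nuOf V) x ≤ C * tailDist (nuOf W) x := by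
  haveI := nuOf_prob V hcV
  haveI := nuOf_prob W hcW
  have hcV' : 0 < ((V (Set.Ioi 0)).toReal) := toReal_pos_of_ne_zero V hcV
  have hcW' : 0 < ((W (Set.Ioi 0)).toReal) := toReal_pos_of_ne_zero W hcW
  set C₁ : ℝ := ((V (Set.Ioi 0)).toReal)⁻¹ * c * (W (Set.Ioi 0)).toReal with hC₁
  set C₂ : ℝ := (tailDist (nuOf W) 0)⁻¹ with hC₂
  have hC₁0 : 0 < C₁ := by positivity
  have hC₂0 : 0 < C₂ := by positivity
  refine ⟨max C₁ C₂, lt_of_lt_of_le hC₁0 (le_max_left _ _), fun x => ?_⟩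
  rcases le_or_gt 0 x with hx | hx
  · rw [nuOf_tailDist V x hx, nuOf_tailDist W x hx]
    calc ((V (Set.Ioi 0)).toReal)⁻¹ * tailDist V (Real.exp x)
        ≤ ((V (Set.Ioi 0)).toReal)⁻¹ * (c * tailDist W (Real.exp x)) := by
          exact mul_le_mul_of_nonneg_left (hU _) (by positivity)
      _ = C₁ * (((W (Set.Ioi 0)).toReal)⁻¹ * tailDist W (Real.exp x)) := by
          rw [hC₁]; field_simp
      _ ≤ max C₁ C₂ * (((W (Set.Ioi 0)).toReal)⁻¹ * tailDist W (Real.exp x)) := by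
          refine mul_le_mul_of_nonneg_right (le_max_left _ _) ?_
          have := tailDist_nonneg W (Real.exp x)
          positivity
  · have h1 : tailDist (nuOf V) x ≤ 1 := tailDist_le_one _ x
    have h2 : tailDist (nuOf W) 0 ≤ tailDist (nuOf W) x := tailDist_anti _ hx.le
    calc tailDist (nuOf V) x ≤ 1 := h1
      _ ≤ C₂ * tailDist (nuOf W) x := by
          rw [hC₂, inv_mul_eq_div, le_div_iff₀ hW0]
          linarith
      _ ≤ max C₁ C₂ * tailDist (nuOf W) x := by
          exact mul_le_mul_of_nonneg_right (le_max_right _ _)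
            (tailDist_nonneg _ _)

lemma srv_littleO (W : Measure ℝ) [IsProbabilityMeasure W] (α : ℝ)
    (hc : W (Set.Ioi 0) ≠ 0)
    (hpos : ∀ x, 0 < tailDist (nuOf W) x)
    (hH2 : ∀ s : ℝ, Tendsto (fun x => tailDist (nuOf W) (x - s) / tailDist (nuOf W) x) atTop
      (nhds (Real.exp (α * s))))
    (y : ℝ) (hy : 0 < y) :
    (fun t => tailDist W (t / y) - y ^ α * tailDist W t) =o[atTop] (tailDist W) := by
  set s := Real.log y with hs
  have hys : y = Real.exp s := (Real.exp_log hy).symm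
  have h1 := littleO_shift_of_tendsto (nuOf W) (Real.exp (α * s)) s hpos (hH2 s)
  have h2 := log_scale_littleO W W hc hc α s h1
  rw [← hys] at h2
  exact h2

lemma exists_min_weight (n : ℕ) (hn : 0 < n) (p : Fin n → ℝ) :
    ∃ m : ℝ, (∀ i, m ≤ p i) ∧ ∃ i, m = p i := by
  haveI : Nonempty (Fin n) := ⟨⟨0, hn⟩⟩
  obtain ⟨b, -, hb⟩ := Finset.exists_min_image Finset.univ p Finset.univ_nonempty
  exact ⟨p b, fun i => hb i (Finset.mem_univ i), b, rfl⟩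

lemma back_step (n : ℕ) (hn : 0 < n) (U : Fin n → Measure ℝ)
    [∀ i, IsProbabilityMeasure (U i)]
    (α : ℝ) (hα : 0 ≤ α)
    (p q : Fin n → ℝ) (hp : ∀ i, 0 < p i ∧ p i < 1) (hps : ∑ i, p i = 1)
    (hq : ∀ i, 0 < q i ∧ q i < 1) (hqs : ∑ i, q i = 1)
    (hSRV : MemSRV α (∑ i, ENNReal.ofReal (p i) • U i))
    (hrel : ∀ y : ℝ, 0 < y → ∀ i, (fun x => tailDist (U i) (x / y)
        - y ^ α * tailDist (U i) x) =o[atTop] (fun x => ∑ j, tailDist (U j) x)) :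
    MemSRV α (∑ i, ENNReal.ofReal (q i) • U i) := by
  haveI hPprob : IsProbabilityMeasure (∑ i, ENNReal.ofReal (p i) • U i) :=
    mix_prob U p (fun i => (hp i).1.le) hps
  haveI hQprob : IsProbabilityMeasure (∑ i, ENNReal.ofReal (q i) • U i) :=
    mix_prob U q (fun i => (hq i).1.le) hqs
  set P := ∑ i, ENNReal.ofReal (p i) • U i with hPdef
  set Q := ∑ i, ENNReal.ofReal (q i) • U i with hQdef
  obtain ⟨hcP, hCE⟩ := hSRV
  obtain ⟨hpos, hH2, hint, hH4⟩ := hCE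
  have hpos' : ∀ x, 0 < tailDist (nuOf P) x := hpos
  have hH2' : ∀ s : ℝ, Tendsto (fun x => tailDist (nuOf P) (x - s) / tailDist (nuOf P) x)
      atTop (nhds (Real.exp (α * s))) := hH2
  have hint' : Integrable (fun x => Real.exp (α * x)) (nuOf P) := hint
  have hH4' : Tendsto (fun x => tailDist (convDist (nuOf P) (nuOf P)) x / tailDist (nuOf P) x)
      atTop (nhds (2 * ∫ u, Real.exp (α * u) ∂(nuOf P))) := hH4
  obtain ⟨mp, hmp, i₀, hi₀⟩ := exists_min_weight n hn p
  obtain ⟨mq, hmq, i₁, hi₁⟩ := exists_min_weight n hn q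
  have hmp0 : 0 < mp := hi₀ ▸ (hp i₀).1
  have hmq0 : 0 < mq := hi₁ ▸ (hq i₁).1
  have hUQP : ∀ t, tailDist Q t ≤ mp⁻¹ * tailDist P t := fun t =>
    mix_tail_compare U q p mp hmp hmp0 (fun i => (hp i).1.le) (fun i => (hq i).1.le)
      (fun i => (hq i).2.le) t
  have hUPQ : ∀ t, tailDist P t ≤ mq⁻¹ * tailDist Q t := fun t =>
    mix_tail_compare U p q mq hmq hmq0 (fun i => (hq i).1.le) (fun i => (hp i).1.le)
      (fun i => (hp i).2.le) t
  have hPt : ∀ t, 0 < tailDist P t := U_tail_pos P hpos' hcP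
  have hQ1 : 0 < tailDist Q 1 :=
    pos_of_dom (inv_pos.mpr hmq0) (hUPQ 1) (hPt 1) (tailDist_nonneg _ _)
  have hcQ1 : Q (Set.Ioi 1) ≠ 0 := (tailDist_pos_iff Q 1).mp hQ1
  have hcQ : Q (Set.Ioi 0) ≠ 0 := fun h0 =>
    hcQ1 (measure_mono_null (Set.Ioi_subset_Ioi zero_le_one) h0)
  haveI hνP := nuOf_prob P hcP
  haveI hνQ := nuOf_prob Q hcQ
  have hνQ0 : 0 < tailDist (nuOf Q) 0 := by
    rw [nuOf_tailDist Q 0 le_rfl, Real.exp_zero]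
    exact mul_pos (inv_pos.mpr (toReal_pos_of_ne_zero Q hcQ)) hQ1
  obtain ⟨CQ, hCQ0, hdomQP⟩ := nu_dom_general Q P hcQ hcP mp⁻¹ (inv_pos.mpr hmp0) hUQP (hpos' 0)
  obtain ⟨CP, hCP0, hdomPQ⟩ := nu_dom_general P Q hcP hcQ mq⁻¹ (inv_pos.mpr hmq0) hUPQ hνQ0
  have hνQpos : ∀ x, 0 < tailDist (nuOf Q) x := fun x =>
    pos_of_dom hCP0 (hdomPQ x) (hpos' x) (tailDist_nonneg _ _)
  have hH6Q : ∀ s : ℝ, (fun x => tailDist (nuOf Q) (x - s)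
      - Real.exp (α * s) * tailDist (nuOf Q) x) =o[atTop] (tailDist (nuOf P)) := by
    intro s
    have hy : (0:ℝ) < Real.exp s := Real.exp_pos s
    have hsum : (fun t => ∑ i, q i * (tailDist (U i) (t / Real.exp s)
        - (Real.exp s) ^ α * tailDist (U i) t)) =o[atTop]
        (fun t => ∑ j, tailDist (U j) t) :=
      by simpa only [Finset.sum_fn] using
        IsLittleO.sum (s := Finset.univ) (fun i _ => ((hrel (Real.exp s) hy i).const_mul_left (q i)))
    have hbig : (fun t : ℝ => ∑ j, tailDist (U j) t) =O[atTop] (tailDist P) := by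
      refine IsBigO.of_bound mp⁻¹ (Filter.Eventually.of_forall (fun t => ?_))
      rw [Real.norm_of_nonneg (Finset.sum_nonneg (fun j _ => tailDist_nonneg _ _)),
        Real.norm_of_nonneg (tailDist_nonneg _ _), le_inv_mul_iff₀ hmp0]
      exact mix_tail_lower U p mp hmp hmp0.le (fun i => (hp i).1.le) t
    have hfun0 : ∀ t : ℝ, ∑ i, q i * (tailDist (U i) (t / Real.exp s)
        - (Real.exp s) ^ α * tailDist (U i) t)
        = tailDist Q (t / Real.exp s) - (Real.exp s) ^ α * tailDist Q t := by
      intro t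
      rw [hQdef, tail_mix U q (fun i => (hq i).1.le), tail_mix U q (fun i => (hq i).1.le),
        Finset.mul_sum, ← Finset.sum_sub_distrib]
      exact Finset.sum_congr rfl (fun i _ => by ring)
    exact exp_scale_littleO P Q hcP hcQ α s
      ((hsum.trans_isBigO hbig).congr' (Filter.Eventually.of_forall hfun0) EventuallyEq.rfl)
  have hCm0 : (0:ℝ) < max CQ 1 := lt_of_lt_of_le one_pos (le_max_right _ _)
  have hdom' : ∀ x, tailDist (nuOf Q) x ≤ (max CQ 1) * tailDist (nuOf P) x := fun x =>
    (hdomQP x).trans (mul_le_mul_of_nonneg_right (le_max_left _ _) (tailDist_nonneg _ _))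
  obtain ⟨hintQ, -, hconv⟩ := main_conv α (max CQ 1) hα hCm0 (nuOf P) (nuOf Q) (nuOf Q)
    hpos' hH2' hint' hH4' hdom' hdom' hH6Q hH6Q
  have hbigPQ : (tailDist (nuOf P)) =O[atTop] (tailDist (nuOf Q)) := by
    refine IsBigO.of_bound CP (Filter.Eventually.of_forall (fun x => ?_))
    rw [Real.norm_of_nonneg (tailDist_nonneg _ _), Real.norm_of_nonneg (tailDist_nonneg _ _)]
    exact hdomPQ x
  refine ⟨hcQ, hνQpos, ?_, hintQ, ?_⟩
  · intro s
    show Tendsto (fun x => tailDist (nuOf Q) (x - s) / tailDist (nuOf Q) x) atTop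
      (nhds (Real.exp (α * s)))
    have h2 := (hH6Q s).trans_isBigO hbigPQ
    have h3 := h2.tendsto_div_nhds_zero
    have h4 := h3.add_const (Real.exp (α * s))
    rw [zero_add] at h4
    refine Tendsto.congr (fun x => ?_) h4
    rw [sub_div, mul_div_assoc, div_self (ne_of_gt (hνQpos x)), mul_one]
    ring
  · show Tendsto (fun x => tailDist (convDist (nuOf Q) (nuOf Q)) x / tailDist (nuOf Q) x)
      atTop (nhds (2 * mgfVal (nuOf Q) α))
    have h2 := hconv.trans_isBigO hbigPQ
    have h3 := h2.tendsto_div_nhds_zero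
    have h4 := h3.add_const (2 * mgfVal (nuOf Q) α)
    rw [zero_add] at h4
    refine Tendsto.congr (fun x => ?_) h4
    have hT : tailDist (nuOf Q) x ≠ 0 := ne_of_gt (hνQpos x)
    have hm : mgfVal (nuOf Q) α = ∫ u, Real.exp (α * u) ∂(nuOf Q) := rfl
    rw [hm]
    field_simp
    ring

lemma fwd_rel (n : ℕ) (U : Fin n → Measure ℝ) [∀ i, IsProbabilityMeasure (U i)]
    (α : ℝ) (p : Fin n → ℝ) (hp : ∀ i, 0 < p i ∧ p i < 1) (hps : ∑ i, p i = 1)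
    (hSRV : MemSRV α (∑ i, ENNReal.ofReal (p i) • U i))
    (y : ℝ) (hy : 0 < y) :
    (fun x => tailDist (∑ i, ENNReal.ofReal (p i) • U i) (x / y)
      - y ^ α * tailDist (∑ i, ENNReal.ofReal (p i) • U i) x)
      =o[atTop] (fun x => ∑ j, tailDist (U j) x) := by
  haveI := mix_prob U p (fun i => (hp i).1.le) hps
  obtain ⟨hc, hpos, hH2, -, -⟩ := hSRV
  have hpos' : ∀ x, 0 < tailDist (nuOf (∑ i, ENNReal.ofReal (p i) • U i)) x := hpos
  have hH2' : ∀ s : ℝ, Tendsto (fun x => tailDist (nuOf (∑ i, ENNReal.ofReal (p i) • U i)) (x - s)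
      / tailDist (nuOf (∑ i, ENNReal.ofReal (p i) • U i)) x) atTop
      (nhds (Real.exp (α * s))) := hH2
  have h1 := srv_littleO (∑ i, ENNReal.ofReal (p i) • U i) α hc hpos' hH2' y hy
  refine h1.trans_isBigO ?_
  refine IsBigO.of_bound 1 (Filter.Eventually.of_forall (fun x => ?_))
  rw [one_mul, Real.norm_of_nonneg (tailDist_nonneg _ _),
    Real.norm_of_nonneg (Finset.sum_nonneg (fun j _ => tailDist_nonneg _ _))]
  exact mix_tail_upper U p (fun i => (hp i).1.le) (fun i => (hp i).2.le) x

end Aux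

/-- Lemma 3.4: equivalence between membership of every convex combination in `R*_{-α}` and
membership of some convex combination plus the relation
`Ūᵢ(x/y) - y^α Ūᵢ(x) = o(Σⱼ Ūⱼ(x))` for every `y > 0`. -/
theorem stmt_11
    (n : ℕ) (hn : 2 ≤ n)
    (U : Fin n → Measure ℝ) [∀ i, IsProbabilityMeasure (U i)]
    (α : ℝ) (hα : 0 ≤ α) :
    (∀ p : Fin n → ℝ, (∀ i, 0 < p i ∧ p i < 1) → ∑ i, p i = 1 →
        MemSRV α (∑ i, ENNReal.ofReal (p i) • U i)) ↔
      ((∃ p : Fin n → ℝ, (∀ i, 0 < p i ∧ p i < 1) ∧ ∑ i, p i = 1 ∧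
          MemSRV α (∑ i, ENNReal.ofReal (p i) • U i)) ∧
        ∀ y : ℝ, 0 < y → ∀ i : Fin n,
          (fun x => tailDist (U i) (x / y) - y ^ α * tailDist (U i) x)
            =o[atTop] (fun x => ∑ j, tailDist (U j) x)) := by
  have hnR : (2:ℝ) ≤ (n:ℝ) := by exact_mod_cast hn
  have hn0 : (0:ℝ) < (n:ℝ) := by linarith
  constructor
  · intro H
    have hbb : ∀ i : Fin n, 0 < (fun _ : Fin n => 1 / (n:ℝ)) i
        ∧ (fun _ : Fin n => 1 / (n:ℝ)) i < 1 := by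
      intro i
      constructor
      · positivity
      · rw [div_lt_one hn0]; linarith
    have hbs : ∑ _i : Fin n, (1 / (n:ℝ)) = 1 := by
      rw [Finset.sum_const, Finset.card_univ, Fintype.card_fin, nsmul_eq_mul]
      field_simp
    refine ⟨⟨fun _ => 1 / (n:ℝ), hbb, hbs, H _ hbb hbs⟩, ?_⟩
    intro y hy i
    set pI : Fin n → ℝ := fun j => if j = i then 1 / (2*(n:ℝ)) + 1/2 else 1 / (2*(n:ℝ))
      with hpI
    have h2n : (0:ℝ) < 2 * n := by linarith
    have h12n : (1:ℝ) / (2*n) ≤ 1/4 := by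
      rw [div_le_div_iff₀ h2n (by norm_num)]
      linarith
    have hpIb : ∀ j, 0 < pI j ∧ pI j < 1 := by
      intro j
      rw [hpI]
      by_cases hj : j = i <;> simp only [hj, if_true, if_false]
      · constructor
        · positivity
        · have : (0:ℝ) < 1 / (2*n) := by positivity
          linarith
      · constructor
        · positivity
        · rw [div_lt_one h2n]; linarith
    have hpIs : ∑ j, pI j = 1 := by
      have hsplit : ∀ j, pI j = 1 / (2*(n:ℝ)) + (if j = i then (1:ℝ)/2 else 0) := by
        intro j
        rw [hpI]
        by_cases hj : j = i <;> simp [hj]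
      rw [Finset.sum_congr rfl (fun j _ => hsplit j), Finset.sum_add_distrib,
        Finset.sum_const, Finset.card_univ, Fintype.card_fin, nsmul_eq_mul,
        Finset.sum_ite_eq' Finset.univ i (fun _ => (1:ℝ)/2)]
      simp only [Finset.mem_univ, if_true]
      field_simp
      ring
    have Ri := fwd_rel n U α pI hpIb hpIs (H pI hpIb hpIs) y hy
    have Rb := fwd_rel n U α (fun _ => 1 / (n:ℝ)) hbb hbs (H _ hbb hbs) y hy
    have key : ∀ t : Fin n → ℝ, 2 * (∑ j, pI j * t j) - ∑ j, (1 / (n:ℝ)) * t j = t i := by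
      intro t
      have h1 : ∀ j, 2 * (pI j * t j) - (1 / (n:ℝ)) * t j
          = (if j = i then t j else 0) := by
        intro j
        rw [hpI]
        by_cases hj : j = i <;> simp only [hj, if_true, if_false]
        · field_simp
          ring
        · field_simp
          ring
      calc 2 * (∑ j, pI j * t j) - ∑ j, (1 / (n:ℝ)) * t j
          = ∑ j, (2 * (pI j * t j) - (1 / (n:ℝ)) * t j) := by
            rw [Finset.mul_sum, ← Finset.sum_sub_distrib]
        _ = ∑ j, (if j = i then t j else 0) := Finset.sum_congr rfl (fun j _ => h1 j)
        _ = t i := by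
            rw [Finset.sum_ite_eq' Finset.univ i t]
            simp
    have target_eq : ∀ x : ℝ, 2 * (tailDist (∑ j, ENNReal.ofReal (pI j) • U j) (x / y)
          - y ^ α * tailDist (∑ j, ENNReal.ofReal (pI j) • U j) x)
        - (tailDist (∑ j, ENNReal.ofReal ((fun _ : Fin n => 1 / (n:ℝ)) j) • U j) (x / y)
          - y ^ α * tailDist (∑ j, ENNReal.ofReal ((fun _ : Fin n => 1 / (n:ℝ)) j) • U j) x)
        = tailDist (U i) (x / y) - y ^ α * tailDist (U i) x := by
      intro x
      rw [tail_mix U pI (fun j => (hpIb j).1.le), tail_mix U pI (fun j => (hpIb j).1.le),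
        tail_mix U (fun _ => 1 / (n:ℝ)) (fun j => (hbb j).1.le),
        tail_mix U (fun _ => 1 / (n:ℝ)) (fun j => (hbb j).1.le)]
      have k1 := key (fun j => tailDist (U j) (x / y))
      have k2 := key (fun j => tailDist (U j) x)
      linear_combination k1 - (y ^ α) * k2
    have hlin := (Ri.const_mul_left 2).sub Rb
    exact hlin.congr' (Filter.Eventually.of_forall target_eq) EventuallyEq.rfl
  · rintro ⟨⟨p, hp, hps, hSRV⟩, hrel⟩
    intro q hq hqs
    exact back_step n (by omega) U α hα p q hp hps hq hqs hSRV hrel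
end
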